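/- arXiv:1501.01507 — 4 statements merged into one kernel-verified Lean document; each statement's English description precedes it below -/
import Mathlib

section
/- Let I be a normal Riesz γ-ideal in a GPEA P, ∼ := ∼_I, and let U be the γ-unitization of P. Then ∼* is a Riesz congruence on U iff ∼ satisfies condition (GCR): a ∼ b implies there exist i, j ∈ I with i ⊕ a = j ⊕ b (equivalently, there exist k, ℓ ∈ I with a ⊕ k = b ⊕ ℓ). -/
open scoped Classical

/-- A generalized pseudo effect algebra: partial orthosummation modeled via `Option`. -/
structure GPEA (P : Type*) where
  oplus : P → P → Option P
  zero : P
  assoc₁ : ∀ {a b c ab s : P}, oplus a b = some ab → oplus ab c = some s →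
    ∃ bc, oplus b c = some bc ∧ oplus a bc = some s
  assoc₂ : ∀ {a b c bc s : P}, oplus b c = some bc → oplus a bc = some s →
    ∃ ab, oplus a b = some ab ∧ oplus ab c = some s
  conj : ∀ {a b s : P}, oplus a b = some s →
    (∃ c, oplus c a = some s) ∧ (∃ d, oplus b d = some s)
  cancel_right : ∀ {a b c s : P}, oplus a c = some s → oplus b c = some s → a = b
  cancel_left : ∀ {a b c s : P}, oplus c a = some s → oplus c b = some s → a = b
  oplus_zero : ∀ a : P, oplus a zero = some a
  zero_oplus : ∀ a : P, oplus zero a = some a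
  pos : ∀ {a b : P}, oplus a b = some zero → a = zero ∧ b = zero

namespace GPEA

variable {P Q : Type*}

/-- `a ≤ b` iff there is `c` with `a ⊕ c = b`. -/
def le (G : GPEA P) (a b : P) : Prop := ∃ c, G.oplus a c = some b

/-- `a ≤ b` (left version) iff there is `d` with `d ⊕ a = b`. -/
def leL (G : GPEA P) (a b : P) : Prop := ∃ d, G.oplus d a = some b

/-- An ideal: a nonempty, downward closed subset closed under existing orthosums. -/
def IsIdeal (G : GPEA P) (I : Set P) : Prop :=
  I.Nonempty ∧ (∀ a ∈ I, ∀ b : P, G.le b a → b ∈ I) ∧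
    (∀ a ∈ I, ∀ b ∈ I, ∀ s : P, G.oplus a b = some s → s ∈ I)

/-- A normal ideal: `a ⊕ c = c ⊕ b` implies `a ∈ I ↔ b ∈ I`. -/
def IsNormalIdeal (G : GPEA P) (I : Set P) : Prop :=
  G.IsIdeal I ∧ ∀ a b c s : P, G.oplus a c = some s → G.oplus c b = some s → (a ∈ I ↔ b ∈ I)

/-- Condition (R1) for an ideal. -/
def R1 (G : GPEA P) (I : Set P) : Prop :=
  ∀ i ∈ I, ∀ a b s : P, G.oplus a b = some s → G.le i s →
    ∃ j ∈ I, ∃ k ∈ I, G.le j a ∧ G.le k b ∧ ∃ t, G.oplus j k = some t ∧ G.le i t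

/-- Condition (R2) for an ideal. -/
def R2 (G : GPEA P) (I : Set P) : Prop :=
  ∀ i ∈ I, ∀ a : P, G.le i a →
    (∀ b x s : P, G.oplus x i = some a → G.oplus x b = some s →
      ∃ j ∈ I, G.le j b ∧ ∀ c, G.oplus j c = some b → ∃ t, G.oplus a c = some t) ∧
    (∀ b y s : P, G.oplus i y = some a → G.oplus b y = some s →
      ∃ k ∈ I, G.le k b ∧ ∀ z, G.oplus z k = some b → ∃ t, G.oplus z a = some t)

/-- A Riesz ideal is an ideal satisfying (R1) and (R2). -/
def IsRieszIdeal (G : GPEA P) (I : Set P) : Prop := G.IsIdeal I ∧ G.R1 I ∧ G.R2 I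

/-- A normal Riesz ideal. -/
def IsNormalRieszIdeal (G : GPEA P) (I : Set P) : Prop := G.IsNormalIdeal I ∧ G.R1 I ∧ G.R2 I

/-- A GPEA-morphism. -/
def IsMorphism (G : GPEA P) (H : GPEA Q) (φ : P → Q) : Prop :=
  ∀ a b s : P, G.oplus a b = some s → H.oplus (φ a) (φ b) = some (φ s)

/-- A unitizing GPEA-automorphism: a GPEA-automorphism `γ` such that
`γa ⊕ b` is defined iff `b ⊕ a` is defined. -/
def IsUnitizing (G : GPEA P) (γ : P → P) : Prop :=
  Function.Bijective γ ∧ G.IsMorphism G γ ∧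
    (∀ a b : P, (∃ s, G.oplus (γ a) (γ b) = some s) → ∃ t, G.oplus a b = some t) ∧
    (∀ a b : P, (∃ s, G.oplus (γ a) b = some s) ↔ ∃ t, G.oplus b a = some t)

/-- A weak congruence. -/
def IsWeakCong (G : GPEA P) (r : P → P → Prop) : Prop :=
  Equivalence r ∧ ∀ a b a₁ b₁ s s₁ : P, G.oplus a b = some s → G.oplus a₁ b₁ = some s₁ →
    r a a₁ → r b b₁ → r s s₁

/-- Condition (C3): a weak congruence satisfying it is a congruence. -/
def C3 (G : GPEA P) (r : P → P → Prop) : Prop :=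
  ∀ a b s : P, G.oplus a b = some s →
    (∀ a₁, r a a₁ → ∃ b₁, r b b₁ ∧ ∃ t, G.oplus a₁ b₁ = some t) ∧
    (∀ b₂, r b b₂ → ∃ a₂, r a a₂ ∧ ∃ t, G.oplus a₂ b₂ = some t)

/-- Condition (C4). -/
def C4 (G : GPEA P) (r : P → P → Prop) : Prop :=
  ∀ a b a₁ b₁ s t : P, r a b →
    ((G.oplus a a₁ = some s ∧ G.oplus b b₁ = some t ∧ r s t) ∨
      (G.oplus a₁ a = some s ∧ G.oplus b₁ b = some t ∧ r s t)) → r a₁ b₁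

/-- Condition (C5'). -/
def C5' (G : GPEA P) (r : P → P → Prop) : Prop :=
  ∀ a b c s : P, G.oplus b c = some s → r a s →
    ∃ a₁ a₂, r a₁ b ∧ r a₂ c ∧ G.oplus a₁ a₂ = some a

/-- Condition (CR): here `a \ c` is the unique `x` with `x ⊕ c = a`. -/
def CR (G : GPEA P) (r : P → P → Prop) : Prop :=
  ∀ a b : P, r a b → ∃ c d : P,
    G.le c a ∧ G.le a d ∧ G.le c b ∧ G.le b d ∧
    (∀ x, G.oplus x c = some a → r x G.zero) ∧
    (∀ x, G.oplus x c = some b → r x G.zero) ∧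
    (∀ x, G.oplus x a = some d → r x G.zero) ∧
    (∀ x, G.oplus x b = some d → r x G.zero)

/-- A Riesz congruence: a congruence satisfying (C4), (C5') and (CR). -/
def IsRieszCong (G : GPEA P) (r : P → P → Prop) : Prop :=
  G.IsWeakCong r ∧ G.C3 r ∧ G.C4 r ∧ G.C5' r ∧ G.CR r

/-- The relation `∼_I` induced by an ideal `I`: `a ∼_I b` iff there are
`i, j ∈ I` with `i ≤ a`, `j ≤ b` and `a \ i = b \ j`. -/
def simI (G : GPEA P) (I : Set P) (a b : P) : Prop :=
  ∃ i ∈ I, ∃ j ∈ I, ∃ d : P, G.oplus d i = some a ∧ G.oplus d j = some b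

/-- Condition (GCR) for the relation `∼_I`. -/
def GCR (G : GPEA P) (I : Set P) : Prop :=
  ∀ a b : P, G.simI I a b → ∃ i ∈ I, ∃ j ∈ I, ∃ s, G.oplus i a = some s ∧ G.oplus j b = some s

/-- The Riesz decomposition property. -/
def RDP (G : GPEA P) : Prop :=
  ∀ a b c d s : P, G.oplus a b = some s → G.oplus c d = some s →
    ∃ e₁₁ e₁₂ e₂₁ e₂₂ : P, G.oplus e₁₁ e₁₂ = some a ∧ G.oplus e₂₁ e₂₂ = some b ∧
      G.oplus e₁₁ e₂₁ = some c ∧ G.oplus e₁₂ e₂₂ = some d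

end GPEA

/-- A pseudo effect algebra: a GPEA with a largest element `1`. -/
structure PEA (P : Type*) extends GPEA P where
  one : P
  le_one : ∀ a : P, ∃ c, oplus a c = some one
  le_one' : ∀ a : P, ∃ d, oplus d a = some one

namespace PEA

variable {P : Type*}

/-- The right supplement `a˜`: the unique element with `a ⊕ a˜ = 1`. -/
noncomputable def rsup (U : PEA P) (a : P) : P := Classical.choose (U.le_one a)

/-- The left supplement `a⁻`: the unique element with `a⁻ ⊕ a = 1`. -/
noncomputable def lsup (U : PEA P) (a : P) : P := Classical.choose (U.le_one' a)

/-- A state on a PEA. -/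
def IsState (U : PEA P) (s : P → ℝ) : Prop :=
  (∀ a : P, 0 ≤ s a ∧ s a ≤ 1) ∧ s U.one = 1 ∧
    ∀ a b c : P, U.oplus a b = some c → s c = s a + s b

end PEA

/-- `U` is a binary unitization of the GPEA `G` via the embedding `ι`. -/
def IsBinaryUnitization {P Q : Type*} (G : GPEA P) (U : PEA Q) (ι : P → Q) : Prop :=
  Function.Injective ι ∧ ι G.zero = U.toGPEA.zero ∧
    (∀ a b : P, U.oplus (ι a) (ι b) = (G.oplus a b).map ι) ∧
    (∀ a : P, U.one ≠ ι a) ∧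
    (∀ x y : Q, x ∉ Set.range ι → y ∉ Set.range ι → U.oplus x y = none)

/-- The orthosummation of the `γ`-unitization on `P ⊕ P`
(`Sum.inl a` is `a ∈ P`, `Sum.inr b` is `ηb`). -/
noncomputable def uop {P : Type*} (G : GPEA P) (γ : P → P) :
    P ⊕ P → P ⊕ P → Option (P ⊕ P)
  | .inl a, .inl b => (G.oplus a b).map .inl
  | .inl a, .inr b => if h : G.leL a b then some (.inr (Classical.choose h)) else none
  | .inr a, .inl b => if h : G.le (γ b) a then some (.inr (Classical.choose h)) else none
  | .inr _, .inr _ => none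

/-- A PEA-isomorphism. -/
def IsPEAIso {A B : Type*} (U : PEA A) (V : PEA B) (φ : A → B) : Prop :=
  Function.Bijective φ ∧
    (∀ a b s : A, U.oplus a b = some s → V.oplus (φ a) (φ b) = some (φ s)) ∧
    (∀ a b : A, (∃ s, V.oplus (φ a) (φ b) = some s) → ∃ t, U.oplus a b = some t) ∧
    φ U.one = V.one

/-- The coordinatewise orthosummation on `I → P`. -/
noncomputable def piOplus {P : Type*} {I : Type*} (G : GPEA P) (f g : I → P) :
    Option (I → P) :=
  if h : ∀ i, ∃ s, G.oplus (f i) (g i) = some s then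
    some (fun i => Classical.choose (h i)) else none

/-- The extension `∼*` of a relation on `P` to `P ⊕ P`. -/
def rstar {P : Type*} (r : P → P → Prop) : P ⊕ P → P ⊕ P → Prop
  | .inl a, .inl b => r a b
  | .inr a, .inr b => r a b
  | _, _ => False

namespace S16
open GPEA Sum

variable {P : Type*} {G : GPEA P} {I : Set P} {γ : P → P}

/-! ### Basic ideal lemmas -/

lemma mem_of_le (hid : G.IsIdeal I) {a b : P} (ha : a ∈ I) (h : G.le b a) : b ∈ I :=
  hid.2.1 a ha b h

lemma mem_left (hid : G.IsIdeal I) {a b s : P} (hs : s ∈ I) (h : G.oplus a b = some s) :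
    a ∈ I := mem_of_le hid hs ⟨b, h⟩

lemma mem_right (hid : G.IsIdeal I) {a b s : P} (hs : s ∈ I) (h : G.oplus a b = some s) :
    b ∈ I := by
  obtain ⟨d, hd⟩ := (G.conj h).2
  exact mem_of_le hid hs ⟨d, hd⟩

lemma zero_mem (hid : G.IsIdeal I) : G.zero ∈ I := by
  obtain ⟨a, ha⟩ := hid.1
  exact mem_of_le hid ha ⟨a, G.zero_oplus a⟩

lemma sum_mem (hid : G.IsIdeal I) {a b s : P} (ha : a ∈ I) (hb : b ∈ I)
    (h : G.oplus a b = some s) : s ∈ I := hid.2.2 a ha b hb s h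

/-- Normality property extracted. -/
def Nrm (G : GPEA P) (I : Set P) : Prop :=
  ∀ a b c s : P, G.oplus a c = some s → G.oplus c b = some s → (a ∈ I ↔ b ∈ I)

lemma swapL (hn : Nrm G I) {i d a : P} (hi : i ∈ I) (h : G.oplus i d = some a) :
    ∃ x ∈ I, G.oplus d x = some a := by
  obtain ⟨x, hx⟩ := (G.conj h).2
  exact ⟨x, (hn i x d a h hx).mp hi, hx⟩

lemma swapR (hn : Nrm G I) {i d a : P} (hi : i ∈ I) (h : G.oplus d i = some a) :
    ∃ x ∈ I, G.oplus x d = some a := by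
  obtain ⟨x, hx⟩ := (G.conj h).1
  exact ⟨x, (hn x i d a hx h).mpr hi, hx⟩

/-! ### simI basics -/

lemma sim_refl (hid : G.IsIdeal I) (a : P) : G.simI I a a :=
  ⟨G.zero, zero_mem hid, G.zero, zero_mem hid, a, G.oplus_zero a, G.oplus_zero a⟩

lemma sim_symm {a b : P} (h : G.simI I a b) : G.simI I b a := by
  obtain ⟨i, hi, j, hj, d, h1, h2⟩ := h
  exact ⟨j, hj, i, hi, d, h2, h1⟩

lemma sim_of_form2 (hn : Nrm G I) {i j d a b : P} (hi : i ∈ I) (hj : j ∈ I)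
    (ha : G.oplus i d = some a) (hb : G.oplus j d = some b) : G.simI I a b := by
  obtain ⟨x, hx, hxa⟩ := swapL hn hi ha
  obtain ⟨y, hy, hyb⟩ := swapL hn hj hb
  exact ⟨x, hx, y, hy, d, hxa, hyb⟩

lemma form2_of_sim (hn : Nrm G I) {a b : P} (h : G.simI I a b) :
    ∃ i ∈ I, ∃ j ∈ I, ∃ d, G.oplus i d = some a ∧ G.oplus j d = some b := by
  obtain ⟨i, hi, j, hj, d, h1, h2⟩ := h
  obtain ⟨x, hx, hxa⟩ := swapR hn hi h1
  obtain ⟨y, hy, hyb⟩ := swapR hn hj h2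
  exact ⟨x, hx, y, hy, d, hxa, hyb⟩

lemma sim_of_mem_mem {i j : P} (hi : i ∈ I) (hj : j ∈ I) : G.simI I i j :=
  ⟨i, hi, j, hj, G.zero, G.zero_oplus i, G.zero_oplus j⟩

lemma sim_zero_of_mem {a : P} (ha : a ∈ I) (hid : G.IsIdeal I) : G.simI I a G.zero :=
  sim_of_mem_mem ha (zero_mem hid)

lemma mem_of_sim_zero {a : P} (h : G.simI I a G.zero) : a ∈ I := by
  obtain ⟨i, hi, j, hj, d, h1, h2⟩ := h
  obtain ⟨hd0, hj0⟩ := G.pos h2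
  subst hd0
  have : a = i := by
    have := G.zero_oplus i
    rw [h1] at this
    exact Option.some.inj this
  rwa [this]

/-! ### The key common-core lemma (T'') -/

lemma Tpp (hid : G.IsIdeal I) (hn : Nrm G I) (hr1 : G.R1 I) {J K x y s : P}
    (hJ : J ∈ I) (hK : K ∈ I) (h1 : G.oplus J x = some s) (h2 : G.oplus K y = some s) :
    ∃ u m n, m ∈ I ∧ n ∈ I ∧ G.oplus m u = some x ∧ G.oplus n u = some y := by
  obtain ⟨A, hA, B, hB, ⟨J₂, hJ₂⟩, ⟨u, hu⟩, t, hABt, S, hKS⟩ :=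
    hr1 K hK J x s h1 ⟨y, h2⟩
  -- s = (J⊕B)⊕u
  obtain ⟨w₁, hw1a, hw1b⟩ := G.assoc₂ hu h1
  -- w₁ = A⊕(J₂⊕B)
  obtain ⟨z, hz1, hz2⟩ := G.assoc₁ hJ₂ hw1a
  have hJ₂I : J₂ ∈ I := mem_right hid hJ hJ₂
  obtain ⟨ζ, hζ, hζz⟩ := swapL hn hJ₂I hz1
  -- w₁ = (A⊕B)⊕ζ and A⊕B = t
  obtain ⟨t₂, ht₂, ht₂w⟩ := G.assoc₂ hζz hz2
  have htt : t₂ = t := Option.some.inj (ht₂ ▸ hABt)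
  subst htt
  -- w₁ = K⊕(S⊕ζ)
  obtain ⟨z₂, hz₂1, hz₂2⟩ := G.assoc₁ hKS ht₂w
  -- s = K⊕(z₂⊕u)
  obtain ⟨z₃, hz₃1, hz₃2⟩ := G.assoc₁ hz₂2 hw1b
  have hyz : y = z₃ := G.cancel_left h2 hz₃2
  have hSI : S ∈ I := mem_right hid (sum_mem hid hA hB hABt) hKS
  have hz₂I : z₂ ∈ I := sum_mem hid hSI hζ hz₂1
  exact ⟨u, B, z₂, hB, hz₂I, hu, hyz ▸ hz₃1⟩

lemma sim_of_form3 (hid : G.IsIdeal I) (hn : Nrm G I) (hr1 : G.R1 I) {i j a b s : P}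
    (hi : i ∈ I) (hj : j ∈ I) (h1 : G.oplus i a = some s) (h2 : G.oplus j b = some s) :
    G.simI I a b := by
  obtain ⟨u, m, n, hm, hn', hma, hnb⟩ := Tpp hid hn hr1 hi hj h1 h2
  exact sim_of_form2 hn hm hn' hma hnb

lemma sim_of_form4 (hid : G.IsIdeal I) (hn : Nrm G I) (hr1 : G.R1 I) {i j a b s : P}
    (hi : i ∈ I) (hj : j ∈ I) (h1 : G.oplus a i = some s) (h2 : G.oplus b j = some s) :
    G.simI I a b := by
  obtain ⟨x, hx, hxa⟩ := swapR hn hi h1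
  obtain ⟨y, hy, hyb⟩ := swapR hn hj h2
  exact sim_of_form3 hid hn hr1 hx hy hxa hyb

lemma sim_trans (hid : G.IsIdeal I) (hn : Nrm G I) (hr1 : G.R1 I) {a b c : P}
    (h1 : G.simI I a b) (h2 : G.simI I b c) : G.simI I a c := by
  obtain ⟨i, hi, j, hj, d, hda, hdb⟩ := h1
  obtain ⟨p, hp, q, hq, e, heb, hec⟩ := h2
  obtain ⟨joo, hjoo, hjoob⟩ := swapR hn hj hdb
  obtain ⟨poo, hpoo, hpoob⟩ := swapR hn hp heb
  obtain ⟨u, m, n, hm, hn', hmd, hne⟩ := Tpp hid hn hr1 hjoo hpoo hjoob hpoob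
  -- a = m⊕(u⊕i), then move m to the right
  obtain ⟨z, hz1, hz2⟩ := G.assoc₁ hmd hda
  obtain ⟨m', hm', hm'a⟩ := swapL hn hm hz2
  obtain ⟨α, hα1, hα2⟩ := G.assoc₁ hz1 hm'a
  obtain ⟨z₂, hz₂1, hz₂2⟩ := G.assoc₁ hne hec
  obtain ⟨n', hn'', hn'c⟩ := swapL hn hn' hz₂2
  obtain ⟨β, hβ1, hβ2⟩ := G.assoc₁ hz₂1 hn'c
  exact ⟨α, sum_mem hid hi hm' hα1, β, sum_mem hid hq hn'' hβ1, u, hα2, hβ2⟩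

end S16
namespace S16
open GPEA Sum

variable {P : Type*} {G : GPEA P} {I : Set P} {γ : P → P}

/-! ### Weak congruence -/

lemma sim_weakcong (hid : G.IsIdeal I) (hn : Nrm G I) {a b s a₁ b₁ s₁ : P}
    (h1 : G.oplus a b = some s) (h2 : G.oplus a₁ b₁ = some s₁)
    (hA : G.simI I a a₁) (hB : G.simI I b b₁) : G.simI I s s₁ := by
  obtain ⟨i, hi, i₁, hi₁, d, hd, hd₁⟩ := hA
  obtain ⟨j, hj, j₁, hj₁, e, he, he₁⟩ := hB
  -- s side
  obtain ⟨z, hz1, hz2⟩ := G.assoc₁ hd h1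
  obtain ⟨w, hw1, hw2⟩ := G.assoc₂ he hz1
  obtain ⟨ι, hι, hιw⟩ := swapL hn hi hw1
  obtain ⟨zz, hzz1, hzz2⟩ := G.assoc₁ hιw hw2
  obtain ⟨c, hc1, hc2⟩ := G.assoc₂ hzz2 hz2
  -- s₁ side
  obtain ⟨z', hz1', hz2'⟩ := G.assoc₁ hd₁ h2
  obtain ⟨w', hw1', hw2'⟩ := G.assoc₂ he₁ hz1'
  obtain ⟨ι', hι', hιw'⟩ := swapL hn hi₁ hw1'
  obtain ⟨zz', hzz1', hzz2'⟩ := G.assoc₁ hιw' hw2'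
  obtain ⟨c', hc1', hc2'⟩ := G.assoc₂ hzz2' hz2'
  have hcc : c = c' := Option.some.inj (hc1 ▸ hc1')
  subst hcc
  exact ⟨zz, sum_mem hid hι hj hzz1, zz', sum_mem hid hι' hj₁ hzz1', c, hc2, hc2'⟩

/-! ### C3 on P -/

lemma c3a (hid : G.IsIdeal I) (hn : Nrm G I) (hr1 : G.R1 I) (hr2 : G.R2 I)
    {a b s a₁ : P} (h : G.oplus a b = some s) (hA : G.simI I a a₁) :
    ∃ b₁ t, G.simI I b b₁ ∧ G.oplus a₁ b₁ = some t := by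
  obtain ⟨j, hj, i, hi, d, hd, hd₁⟩ := hA
  obtain ⟨z, hz1, hz2⟩ := G.assoc₁ hd h
  have hle : G.le i a₁ := (G.conj hd₁).2
  obtain ⟨j', hj', hlej', hdef⟩ := (hr2 i hi a₁ hle).1 z d s hd₁ hz2
  obtain ⟨c₀, hc₀⟩ := hlej'
  obtain ⟨t, ht⟩ := hdef c₀ hc₀
  exact ⟨c₀, t, sim_of_form3 hid hn hr1 hj hj' hz1 hc₀, ht⟩

lemma c3b (hid : G.IsIdeal I) (hn : Nrm G I) (hr1 : G.R1 I) (hr2 : G.R2 I)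
    {a b s b₂ : P} (h : G.oplus a b = some s) (hB : G.simI I b b₂) :
    ∃ a₂ t, G.simI I a a₂ ∧ G.oplus a₂ b₂ = some t := by
  obtain ⟨K, hK, K₂, hK₂, e, hKe, hK₂e⟩ := form2_of_sim hn hB
  obtain ⟨w, hw1, hw2⟩ := G.assoc₂ hKe h
  have hle : G.le K₂ b₂ := ⟨e, hK₂e⟩
  obtain ⟨k₁, hk₁, hlek₁, hdef⟩ := (hr2 K₂ hK₂ b₂ hle).2 w e s hK₂e hw2
  obtain ⟨c, hc⟩ := hlek₁
  obtain ⟨z, hz⟩ := (G.conj hc).1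
  obtain ⟨t, ht⟩ := hdef z hz
  exact ⟨z, t, sim_of_form4 hid hn hr1 hK hk₁ hw1 hz, ht⟩

/-! ### Cancellation (uses GCR) -/

lemma lcancel (hid : G.IsIdeal I) (hn : Nrm G I) (hr1 : G.R1 I) (hgcr : G.GCR I)
    {d x y X Y : P} (h1 : G.oplus d x = some X) (h2 : G.oplus d y = some Y)
    (hXY : G.simI I X Y) : G.simI I x y := by
  obtain ⟨i, hi, j, hj, s, his, hjs⟩ := hgcr X Y hXY
  obtain ⟨w, hw1, hw2⟩ := G.assoc₂ h1 his
  obtain ⟨w', hw1', hw2'⟩ := G.assoc₂ h2 hjs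
  have hdw : G.simI I d w := sim_of_form3 hid hn hr1 hi (zero_mem hid) hw1 (G.zero_oplus w)
  have hdw' : G.simI I d w' := sim_of_form3 hid hn hr1 hj (zero_mem hid) hw1' (G.zero_oplus w')
  have hww' : G.simI I w w' := sim_trans hid hn hr1 (sim_symm hdw) hdw'
  obtain ⟨p, hp, q, hq, c, hcp, hcq⟩ := hww'
  obtain ⟨z, hz1, hz2⟩ := G.assoc₁ hcp hw2
  obtain ⟨z', hz1', hz2'⟩ := G.assoc₁ hcq hw2'
  have hzz : z = z' := G.cancel_left hz2 hz2'
  subst hzz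
  exact sim_of_form3 hid hn hr1 hp hq hz1 hz1'

lemma rcancel (hid : G.IsIdeal I) (hn : Nrm G I) (hr1 : G.R1 I) (hgcr : G.GCR I)
    {d x y X Y : P} (h1 : G.oplus x d = some X) (h2 : G.oplus y d = some Y)
    (hXY : G.simI I X Y) : G.simI I x y := by
  obtain ⟨i, hi, j, hj, s, his, hjs⟩ := hgcr X Y hXY
  obtain ⟨i2, hi2, hXs⟩ := swapL hn hi his
  obtain ⟨j2, hj2, hYs⟩ := swapL hn hj hjs
  obtain ⟨w, hw1, hw2⟩ := G.assoc₁ h1 hXs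
  obtain ⟨w', hw1', hw2'⟩ := G.assoc₁ h2 hYs
  have hdw : G.simI I d w := sim_of_form4 hid hn hr1 hi2 (zero_mem hid) hw1 (G.oplus_zero w)
  have hdw' : G.simI I d w' := sim_of_form4 hid hn hr1 hj2 (zero_mem hid) hw1' (G.oplus_zero w')
  have hww' : G.simI I w w' := sim_trans hid hn hr1 (sim_symm hdw) hdw'
  obtain ⟨p, hp, q, hq, c, hpc, hqc⟩ := form2_of_sim hn hww'
  obtain ⟨v, hv1, hv2⟩ := G.assoc₂ hpc hw2
  obtain ⟨v', hv1', hv2'⟩ := G.assoc₂ hqc hw2'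
  have hvv : v = v' := G.cancel_right hv2 hv2'
  subst hvv
  exact sim_of_form4 hid hn hr1 hp hq hv1 hv1'

/-! ### C4 on P -/

lemma c4P1 (hid : G.IsIdeal I) (hn : Nrm G I) (hr1 : G.R1 I) (hgcr : G.GCR I)
    {a b a₁ b₁ s t : P} (hab : G.simI I a b) (h1 : G.oplus a a₁ = some s)
    (h2 : G.oplus b b₁ = some t) (hst : G.simI I s t) : G.simI I a₁ b₁ := by
  obtain ⟨i, hi, j, hj, d, hd, hd'⟩ := hab
  obtain ⟨z, hz1, hz2⟩ := G.assoc₁ hd h1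
  obtain ⟨ι, hι, hιz⟩ := swapL hn hi hz1
  obtain ⟨α, hα1, hα2⟩ := G.assoc₂ hιz hz2
  obtain ⟨z', hz1', hz2'⟩ := G.assoc₁ hd' h2
  obtain ⟨ι', hι', hιz'⟩ := swapL hn hj hz1'
  obtain ⟨β, hβ1, hβ2⟩ := G.assoc₂ hιz' hz2'
  have hαs : G.simI I α s := sim_of_form4 hid hn hr1 hι (zero_mem hid) hα2 (G.oplus_zero s)
  have hβt : G.simI I β t := sim_of_form4 hid hn hr1 hι' (zero_mem hid) hβ2 (G.oplus_zero t)
  have hαβ : G.simI I α β :=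
    sim_trans hid hn hr1 (sim_trans hid hn hr1 hαs hst) (sim_symm hβt)
  exact lcancel hid hn hr1 hgcr hα1 hβ1 hαβ

lemma c4P2 (hid : G.IsIdeal I) (hn : Nrm G I) (hr1 : G.R1 I) (hgcr : G.GCR I)
    {a b a₁ b₁ s t : P} (hab : G.simI I a b) (h1 : G.oplus a₁ a = some s)
    (h2 : G.oplus b₁ b = some t) (hst : G.simI I s t) : G.simI I a₁ b₁ := by
  obtain ⟨i, hi, j, hj, d, hd, hd'⟩ := hab
  obtain ⟨w, hw1, hw2⟩ := G.assoc₂ hd h1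
  obtain ⟨w', hw1', hw2'⟩ := G.assoc₂ hd' h2
  have hws : G.simI I w s := sim_of_form4 hid hn hr1 hi (zero_mem hid) hw2 (G.oplus_zero s)
  have hwt : G.simI I w' t := sim_of_form4 hid hn hr1 hj (zero_mem hid) hw2' (G.oplus_zero t)
  have hww : G.simI I w w' :=
    sim_trans hid hn hr1 (sim_trans hid hn hr1 hws hst) (sim_symm hwt)
  exact rcancel hid hn hr1 hgcr hw1 hw1' hww

/-! ### C5' on P -/

lemma c5P (hid : G.IsIdeal I) (hn : Nrm G I) (hr1 : G.R1 I)
    {a b c s : P} (h : G.oplus b c = some s) (ha : G.simI I a s) :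
    ∃ a₁ a₂, G.simI I a₁ b ∧ G.simI I a₂ c ∧ G.oplus a₁ a₂ = some a := by
  obtain ⟨p, hp, q, hq, f, hpf, hqf⟩ := form2_of_sim hn ha
  obtain ⟨A, hA, B, hB, ⟨bx, hbx⟩, ⟨c₁, hBc₁⟩, t, hABt, S, hqS⟩ :=
    hr1 q hq b c s h ⟨f, hqf⟩
  obtain ⟨b₁', hb₁'⟩ := (G.conj hbx).1
  obtain ⟨z, hz1, hz2⟩ := G.assoc₁ hb₁' h
  obtain ⟨t₂, ht₂1, ht₂2⟩ := G.assoc₂ hBc₁ hz1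
  have htt : t₂ = t := Option.some.inj (ht₂1 ▸ hABt)
  subst htt
  obtain ⟨w₁, hw₁1, hw₁2⟩ := G.assoc₂ ht₂2 hz2
  obtain ⟨v, hv1, hv2⟩ := G.assoc₂ hqS hw₁1
  obtain ⟨d₀, hd₀⟩ := (G.conj hv1).2
  obtain ⟨Z, hZ1, hZ2⟩ := G.assoc₁ hd₀ hv2
  obtain ⟨f', hf'1, hf'2⟩ := G.assoc₁ hZ2 hw₁2
  have hff : f' = f := G.cancel_left hf'2 hqf
  subst hff
  obtain ⟨a₁, ha₁1, ha₁2⟩ := G.assoc₂ hf'1 hpf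
  have htI := sum_mem hid hA hB hABt
  obtain ⟨t', ht', ht'w⟩ := swapR hn htI hw₁1
  have hZa₁ : G.simI I Z a₁ := sim_of_form3 hid hn hr1 hp (zero_mem hid) ha₁1 (G.zero_oplus a₁)
  have hZb₁ : G.simI I Z b₁' := sim_of_form3 hid hn hr1 hq ht' hZ2 ht'w
  have hb₁b : G.simI I b₁' b := sim_of_form4 hid hn hr1 hA (zero_mem hid) hb₁' (G.oplus_zero b)
  have ha₁b : G.simI I a₁ b :=
    sim_trans hid hn hr1 (sim_trans hid hn hr1 (sim_symm hZa₁) hZb₁) hb₁b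
  have hc₁c : G.simI I c₁ c := sim_of_form3 hid hn hr1 hB (zero_mem hid) hBc₁ (G.zero_oplus c)
  exact ⟨a₁, c₁, ha₁b, hc₁c, ha₁2⟩

end S16
namespace S16
open GPEA Sum

variable {P : Type*} {G : GPEA P} {I : Set P} {γ : P → P}

/-! ### γ lemmas -/

lemma gamma_morph (hγ : G.IsUnitizing γ) {a b s : P} (h : G.oplus a b = some s) :
    G.oplus (γ a) (γ b) = some (γ s) := hγ.2.1 a b s h

lemma gamma_rev (hγ : G.IsUnitizing γ) {a b s : P}
    (h : G.oplus (γ a) (γ b) = some (γ s)) : G.oplus a b = some s := by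
  obtain ⟨t, ht⟩ := hγ.2.2.1 a b ⟨γ s, h⟩
  have h2 := gamma_morph hγ ht
  have : γ s = γ t := Option.some.inj (h ▸ h2)
  have hst : s = t := hγ.1.1 this
  rwa [← hst] at ht

lemma sim_gamma (hγ : G.IsUnitizing γ) (hγI : ∀ a : P, a ∈ I ↔ γ a ∈ I)
    {a b : P} (h : G.simI I a b) : G.simI I (γ a) (γ b) := by
  obtain ⟨i, hi, j, hj, d, h1, h2⟩ := h
  exact ⟨γ i, (hγI i).mp hi, γ j, (hγI j).mp hj, γ d,
    gamma_morph hγ h1, gamma_morph hγ h2⟩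

lemma sim_gamma_rev (hγ : G.IsUnitizing γ) (hγI : ∀ a : P, a ∈ I ↔ γ a ∈ I)
    {a b : P} (h : G.simI I (γ a) (γ b)) : G.simI I a b := by
  obtain ⟨i, hi, j, hj, d, h1, h2⟩ := h
  obtain ⟨i', rfl⟩ := hγ.1.2 i
  obtain ⟨j', rfl⟩ := hγ.1.2 j
  obtain ⟨d', rfl⟩ := hγ.1.2 d
  exact ⟨i', (hγI i').mpr hi, j', (hγI j').mpr hj, d',
    gamma_rev hγ h1, gamma_rev hγ h2⟩

/-! ### uop computation lemmas -/

lemma uop_ll {a b : P} : uop G γ (.inl a) (.inl b) = (G.oplus a b).map .inl := rfl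

lemma uop_rr {a b : P} : uop G γ (.inr a) (.inr b) = none := rfl

lemma uop_ll_intro {a b s : P} (h : G.oplus a b = some s) :
    uop G γ (.inl a) (.inl b) = some (.inl s) := by
  rw [uop_ll, h]; rfl

lemma uop_ll_elim {a b : P} {s : P ⊕ P} (h : uop G γ (.inl a) (.inl b) = some s) :
    ∃ t, s = .inl t ∧ G.oplus a b = some t := by
  rw [uop_ll] at h
  cases hab : G.oplus a b with
  | none => rw [hab] at h; exact absurd h (by simp)
  | some t => rw [hab] at h; exact ⟨t, (Option.some.inj h).symm, rfl⟩

lemma uop_lr_intro {a y w : P} (h : G.oplus w a = some y) :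
    uop G γ (.inl a) (.inr y) = some (.inr w) := by
  have hle : G.leL a y := ⟨w, h⟩
  show (if h' : G.leL a y then some (Sum.inr (Classical.choose h')) else none) = _
  rw [dif_pos hle]
  have := Classical.choose_spec hle
  rw [G.cancel_right this h]

lemma uop_lr_elim {a y : P} {s : P ⊕ P} (h : uop G γ (.inl a) (.inr y) = some s) :
    ∃ w, s = .inr w ∧ G.oplus w a = some y := by
  by_cases hle : G.leL a y
  · refine ⟨Classical.choose hle, ?_, Classical.choose_spec hle⟩
    have : uop G γ (.inl a) (.inr y) = some (Sum.inr (Classical.choose hle)) := dif_pos hle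
    rw [this] at h
    exact (Option.some.inj h).symm
  · have : uop G γ (.inl a) (.inr y) = none := dif_neg hle
    rw [this] at h
    exact absurd h (by simp)

lemma uop_rl_intro {b y v : P} (h : G.oplus (γ b) v = some y) :
    uop G γ (.inr y) (.inl b) = some (.inr v) := by
  have hle : G.le (γ b) y := ⟨v, h⟩
  show (if h' : G.le (γ b) y then some (Sum.inr (Classical.choose h')) else none) = _
  rw [dif_pos hle]
  have := Classical.choose_spec hle
  rw [G.cancel_left this h]

lemma uop_rl_elim {b y : P} {s : P ⊕ P} (h : uop G γ (.inr y) (.inl b) = some s) :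
    ∃ v, s = .inr v ∧ G.oplus (γ b) v = some y := by
  by_cases hle : G.le (γ b) y
  · refine ⟨Classical.choose hle, ?_, Classical.choose_spec hle⟩
    have : uop G γ (.inr y) (.inl b) = some (Sum.inr (Classical.choose hle)) := dif_pos hle
    rw [this] at h
    exact (Option.some.inj h).symm
  · have : uop G γ (.inr y) (.inl b) = none := dif_neg hle
    rw [this] at h
    exact absurd h (by simp)

end S16
namespace S16
open GPEA Sum

variable {P : Type*} {G : GPEA P} {I : Set P} {γ : P → P}

lemma uconj (U : PEA (P ⊕ P)) (hop : U.toGPEA.oplus = uop G γ) {a b s : P ⊕ P}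
    (h : uop G γ a b = some s) :
    (∃ c, uop G γ c a = some s) ∧ (∃ d, uop G γ b d = some s) := by
  rw [← hop] at h ⊢
  exact U.toGPEA.conj h

lemma conj1 (U : PEA (P ⊕ P)) (hop : U.toGPEA.oplus = uop G γ) {w x y : P}
    (h : G.oplus w x = some y) : ∃ d, G.oplus (γ d) w = some y := by
  obtain ⟨d, hd⟩ := (uconj U hop (uop_lr_intro (γ := γ) h)).2
  cases d with
  | inl d' =>
      obtain ⟨v, hv, hγ⟩ := uop_rl_elim hd
      obtain rfl : w = v := Sum.inr.inj hv
      exact ⟨d', hγ⟩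
  | inr d' => exact nomatch (uop_rr (γ := γ) ▸ hd)

/-! ### backward: the Riesz congruence conditions for `∼*` -/

lemma req (hid : G.IsIdeal I) (hn : Nrm G I) (hr1 : G.R1 I) :
    Equivalence (rstar (G.simI I)) := by
  constructor
  · intro x; cases x with
    | inl a => exact sim_refl hid a
    | inr a => exact sim_refl hid a
  · intro x y h
    cases x <;> cases y <;> first
      | exact False.elim h
      | exact sim_symm h
  · intro x y z h1 h2
    cases x <;> cases y <;> cases z <;> first
      | exact False.elim h1
      | exact False.elim h2
      | exact sim_trans hid hn hr1 h1 h2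

lemma bwd_cong (hid : G.IsIdeal I) (hn : Nrm G I) (hr1 : G.R1 I) (hgcr : G.GCR I)
    (hγ : G.IsUnitizing γ) (hγI : ∀ a : P, a ∈ I ↔ γ a ∈ I)
    {a b a₁ b₁ s s₁ : P ⊕ P} (h : uop G γ a b = some s) (h₁ : uop G γ a₁ b₁ = some s₁)
    (hA : rstar (G.simI I) a a₁) (hB : rstar (G.simI I) b b₁) :
    rstar (G.simI I) s s₁ := by
  cases a with
  | inl a' =>
    cases a₁ with
    | inl a₁' =>
      cases b with
      | inl b' =>
        cases b₁ with
        | inl b₁' =>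
          obtain ⟨s', rfl, hs⟩ := uop_ll_elim h
          obtain ⟨s₁', rfl, hs₁⟩ := uop_ll_elim h₁
          exact sim_weakcong hid hn hs hs₁ hA hB
        | inr y => exact False.elim hB
      | inr b' =>
        cases b₁ with
        | inl y => exact False.elim hB
        | inr b₁' =>
          obtain ⟨w, rfl, hw⟩ := uop_lr_elim h
          obtain ⟨w₁, rfl, hw₁⟩ := uop_lr_elim h₁
          exact c4P2 hid hn hr1 hgcr hA hw hw₁ hB
    | inr y => exact False.elim hA
  | inr a' =>
    cases a₁ with
    | inl y => exact False.elim hA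
    | inr a₁' =>
      cases b with
      | inl b' =>
        cases b₁ with
        | inl b₁' =>
          obtain ⟨v, rfl, hv⟩ := uop_rl_elim h
          obtain ⟨v₁, rfl, hv₁⟩ := uop_rl_elim h₁
          exact c4P1 hid hn hr1 hgcr (sim_gamma hγ hγI hB) hv hv₁ hA
        | inr y => exact False.elim hB
      | inr b' =>
        cases b₁ with
        | inl y => exact False.elim hB
        | inr b₁' => exact nomatch (uop_rr (γ := γ) ▸ h)

end S16
namespace S16
open GPEA Sum

variable {P : Type*} {G : GPEA P} {I : Set P} {γ : P → P}

lemma bwd_c3 (hid : G.IsIdeal I) (hn : Nrm G I) (hr1 : G.R1 I) (hr2 : G.R2 I)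
    (hγ : G.IsUnitizing γ) (hγI : ∀ a : P, a ∈ I ↔ γ a ∈ I)
    {a b s : P ⊕ P} (h : uop G γ a b = some s) :
    (∀ a₁, rstar (G.simI I) a a₁ →
      ∃ b₁, rstar (G.simI I) b b₁ ∧ ∃ t, uop G γ a₁ b₁ = some t) ∧
    (∀ b₂, rstar (G.simI I) b b₂ →
      ∃ a₂, rstar (G.simI I) a a₂ ∧ ∃ t, uop G γ a₂ b₂ = some t) := by
  cases a with
  | inl a' =>
    cases b with
    | inl b' =>
      obtain ⟨s', rfl, hs⟩ := uop_ll_elim h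
      constructor
      · intro a₁ hA
        cases a₁ with
        | inl a₁' =>
          obtain ⟨b₁, t, hb, ht⟩ := c3a hid hn hr1 hr2 hs hA
          exact ⟨.inl b₁, hb, .inl t, uop_ll_intro ht⟩
        | inr y => exact False.elim hA
      · intro b₂ hB
        cases b₂ with
        | inl b₂' =>
          obtain ⟨a₂, t, ha, ht⟩ := c3b hid hn hr1 hr2 hs hB
          exact ⟨.inl a₂, ha, .inl t, uop_ll_intro ht⟩
        | inr y => exact False.elim hB
    | inr b' =>
      obtain ⟨v, rfl, hv⟩ := uop_lr_elim h
      constructor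
      · intro a₁ hA
        cases a₁ with
        | inl a₁' =>
          obtain ⟨w₂, t, hw₂, ht⟩ := c3b hid hn hr1 hr2 hv hA
          exact ⟨.inr t, sim_weakcong hid hn hv ht hw₂ hA, .inr w₂, uop_lr_intro ht⟩
        | inr y => exact False.elim hA
      · intro b₂ hB
        cases b₂ with
        | inl y => exact False.elim hB
        | inr b₂' =>
          obtain ⟨u₁, u₂, h1, h2, h12⟩ := c5P hid hn hr1 hv (sim_symm hB)
          exact ⟨.inl u₂, sim_symm h2, .inr u₁, uop_lr_intro h12⟩
  | inr a' =>
    cases b with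
    | inl b' =>
      obtain ⟨v, rfl, hv⟩ := uop_rl_elim h
      constructor
      · intro a₁ hA
        cases a₁ with
        | inl y => exact False.elim hA
        | inr a₁' =>
          obtain ⟨u₁, u₂, h1, h2, h12⟩ := c5P hid hn hr1 hv (sim_symm hA)
          obtain ⟨b₁, rfl⟩ := hγ.1.2 u₁
          exact ⟨.inl b₁, sim_symm (sim_gamma_rev hγ hγI h1), .inr u₂,
            uop_rl_intro h12⟩
      · intro b₂ hB
        cases b₂ with
        | inl b₂' =>
          obtain ⟨v₁, t, hvv, ht⟩ := c3a hid hn hr1 hr2 hv (sim_gamma hγ hγI hB)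
          exact ⟨.inr t, sim_weakcong hid hn hv ht (sim_gamma hγ hγI hB) hvv,
            .inr v₁, uop_rl_intro ht⟩
        | inr y => exact False.elim hB
    | inr b' => exact nomatch (uop_rr (γ := γ) ▸ h)

lemma bwd_c4 (hid : G.IsIdeal I) (hn : Nrm G I) (hr1 : G.R1 I) (hgcr : G.GCR I)
    (hγ : G.IsUnitizing γ) (hγI : ∀ a : P, a ∈ I ↔ γ a ∈ I)
    {a b a₁ b₁ s t : P ⊕ P} (hab : rstar (G.simI I) a b)
    (hd : (uop G γ a a₁ = some s ∧ uop G γ b b₁ = some t ∧ rstar (G.simI I) s t) ∨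
      (uop G γ a₁ a = some s ∧ uop G γ b₁ b = some t ∧ rstar (G.simI I) s t)) :
    rstar (G.simI I) a₁ b₁ := by
  cases a with
  | inl a₂ =>
    cases b with
    | inl b₂ =>
      rcases hd with ⟨h1, h2, hst⟩ | ⟨h1, h2, hst⟩
      · cases a₁ with
        | inl a₁' =>
          obtain ⟨s', rfl, hs⟩ := uop_ll_elim h1
          cases b₁ with
          | inl b₁' =>
            obtain ⟨t', rfl, ht⟩ := uop_ll_elim h2
            exact c4P1 hid hn hr1 hgcr hab hs ht hst
          | inr y₂ =>
            obtain ⟨w, rfl, hw⟩ := uop_lr_elim h2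
            exact False.elim hst
        | inr y =>
          obtain ⟨w, rfl, hw⟩ := uop_lr_elim h1
          cases b₁ with
          | inl b₁' =>
            obtain ⟨t', rfl, ht⟩ := uop_ll_elim h2
            exact False.elim hst
          | inr y₂ =>
            obtain ⟨w₂, rfl, hw₂⟩ := uop_lr_elim h2
            exact sim_weakcong hid hn hw hw₂ hst hab
      · cases a₁ with
        | inl a₁' =>
          obtain ⟨s', rfl, hs⟩ := uop_ll_elim h1
          cases b₁ with
          | inl b₁' =>
            obtain ⟨t', rfl, ht⟩ := uop_ll_elim h2
            exact c4P2 hid hn hr1 hgcr hab hs ht hst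
          | inr y₂ =>
            obtain ⟨w, rfl, hw⟩ := uop_rl_elim h2
            exact False.elim hst
        | inr y =>
          obtain ⟨v, rfl, hv⟩ := uop_rl_elim h1
          cases b₁ with
          | inl b₁' =>
            obtain ⟨t', rfl, ht⟩ := uop_ll_elim h2
            exact False.elim hst
          | inr y₂ =>
            obtain ⟨v₂, rfl, hv₂⟩ := uop_rl_elim h2
            exact sim_weakcong hid hn hv hv₂ (sim_gamma hγ hγI hab) hst
    | inr b₂ => exact False.elim hab
  | inr a₂ =>
    cases b with
    | inl b₂ => exact False.elim hab
    | inr b₂ =>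
      rcases hd with ⟨h1, h2, hst⟩ | ⟨h1, h2, hst⟩
      · cases a₁ with
        | inl a₁' =>
          obtain ⟨v, rfl, hv⟩ := uop_rl_elim h1
          cases b₁ with
          | inl b₁' =>
            obtain ⟨w, rfl, hw⟩ := uop_rl_elim h2
            exact sim_gamma_rev hγ hγI (c4P2 hid hn hr1 hgcr hst hv hw hab)
          | inr y => exact nomatch (uop_rr (γ := γ) ▸ h2)
        | inr y => exact nomatch (uop_rr (γ := γ) ▸ h1)
      · cases a₁ with
        | inl a₁' =>
          obtain ⟨v, rfl, hv⟩ := uop_lr_elim h1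
          cases b₁ with
          | inl b₁' =>
            obtain ⟨w, rfl, hw⟩ := uop_lr_elim h2
            exact c4P1 hid hn hr1 hgcr hst hv hw hab
          | inr y => exact nomatch (uop_rr (γ := γ) ▸ h2)
        | inr y => exact nomatch (uop_rr (γ := γ) ▸ h1)

lemma bwd_c5 (hid : G.IsIdeal I) (hn : Nrm G I) (hr1 : G.R1 I) (hr2 : G.R2 I)
    (hγ : G.IsUnitizing γ) (hγI : ∀ a : P, a ∈ I ↔ γ a ∈ I)
    {a b c s : P ⊕ P} (h : uop G γ b c = some s) (ha : rstar (G.simI I) a s) :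
    ∃ a₁ a₂, rstar (G.simI I) a₁ b ∧ rstar (G.simI I) a₂ c ∧
      uop G γ a₁ a₂ = some a := by
  cases b with
  | inl b' =>
    cases c with
    | inl c' =>
      obtain ⟨s', rfl, hbc⟩ := uop_ll_elim h
      cases a with
      | inl a₀ =>
        obtain ⟨a₁, a₂, h1, h2, h12⟩ := c5P hid hn hr1 hbc ha
        exact ⟨.inl a₁, .inl a₂, h1, h2, uop_ll_intro h12⟩
      | inr a₀ => exact False.elim ha
    | inr c' =>
      obtain ⟨v, rfl, hv⟩ := uop_lr_elim h
      cases a with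
      | inl a₀ => exact False.elim ha
      | inr a₀ =>
        obtain ⟨b₁, t, hb₁, ht⟩ := c3a hid hn hr1 hr2 hv (sim_symm ha)
        exact ⟨.inl b₁, .inr t, sim_symm hb₁,
          sim_weakcong hid hn ht hv ha (sim_symm hb₁), uop_lr_intro ht⟩
  | inr b₀ =>
    cases c with
    | inl c₀ =>
      obtain ⟨v, rfl, hv⟩ := uop_rl_elim h
      cases a with
      | inl a₀ => exact False.elim ha
      | inr a₀ =>
        obtain ⟨u, t, hu, ht⟩ := c3b hid hn hr1 hr2 hv (sim_symm ha)
        obtain ⟨x, rfl⟩ := hγ.1.2 u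
        refine ⟨.inr t, .inl x, sim_weakcong hid hn ht hv (sim_symm hu) ha,
          sim_symm (sim_gamma_rev hγ hγI hu), uop_rl_intro ht⟩
    | inr c₀ => exact nomatch (uop_rr (γ := γ) ▸ h)

end S16
namespace S16
open GPEA Sum

variable {P : Type*} {G : GPEA P} {I : Set P} {γ : P → P}

lemma bwd_cr (hid : G.IsIdeal I) (hn : Nrm G I) (hgcr : G.GCR I)
    (hγ : G.IsUnitizing γ) (U : PEA (P ⊕ P)) (hop : U.toGPEA.oplus = uop G γ)
    (hz : U.toGPEA.zero = Sum.inl G.zero) :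
    U.toGPEA.CR (rstar (G.simI I)) := by
  intro a b hab
  cases a with
  | inl a' =>
    cases b with
    | inl b' =>
      obtain ⟨i', hi', j', hj', s₀, h3, h4⟩ := hgcr a' b' hab
      obtain ⟨ca, hca⟩ := (G.conj h3).2
      obtain ⟨cb, hcb⟩ := (G.conj h4).2
      obtain ⟨i, hi, j, hj, e, he1, he2⟩ := hab
      refine ⟨.inl e, .inl s₀,
        ⟨.inl i, by rw [hop]; exact uop_ll_intro he1⟩,
        ⟨.inl ca, by rw [hop]; exact uop_ll_intro hca⟩,
        ⟨.inl j, by rw [hop]; exact uop_ll_intro he2⟩,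
        ⟨.inl cb, by rw [hop]; exact uop_ll_intro hcb⟩, ?_, ?_, ?_, ?_⟩
      · intro x hx; rw [hop] at hx; rw [hz]
        cases x with
        | inl x' =>
          obtain ⟨u, hueq, hu⟩ := uop_ll_elim hx
          obtain rfl := Sum.inl.inj hueq
          exact sim_zero_of_mem ((hn x' i e a' hu he1).mpr hi) hid
        | inr x' => exact absurd (uop_rl_elim hx) (by rintro ⟨v, hv, -⟩; cases hv)
      · intro x hx; rw [hop] at hx; rw [hz]
        cases x with
        | inl x' =>
          obtain ⟨u, hueq, hu⟩ := uop_ll_elim hx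
          obtain rfl := Sum.inl.inj hueq
          exact sim_zero_of_mem ((hn x' j e b' hu he2).mpr hj) hid
        | inr x' => exact absurd (uop_rl_elim hx) (by rintro ⟨v, hv, -⟩; cases hv)
      · intro x hx; rw [hop] at hx; rw [hz]
        cases x with
        | inl x' =>
          obtain ⟨u, hueq, hu⟩ := uop_ll_elim hx
          obtain rfl := Sum.inl.inj hueq
          exact sim_zero_of_mem (G.cancel_right hu h3 ▸ hi') hid
        | inr x' => exact absurd (uop_rl_elim hx) (by rintro ⟨v, hv, -⟩; cases hv)
      · intro x hx; rw [hop] at hx; rw [hz]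
        cases x with
        | inl x' =>
          obtain ⟨u, hueq, hu⟩ := uop_ll_elim hx
          obtain rfl := Sum.inl.inj hueq
          exact sim_zero_of_mem (G.cancel_right hu h4 ▸ hj') hid
        | inr x' => exact absurd (uop_rl_elim hx) (by rintro ⟨v, hv, -⟩; cases hv)
    | inr b' => exact False.elim hab
  | inr a' =>
    cases b with
    | inl b' => exact False.elim hab
    | inr b' =>
      obtain ⟨i0, hi0, j0, hj0, s₀, h3, h4⟩ := hgcr a' b' hab
      obtain ⟨i, hi, hia⟩ := swapL hn hi0 h3
      obtain ⟨j, hj, hjb⟩ := swapL hn hj0 h4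
      obtain ⟨p, hp, q, hq, f, hpf, hqf⟩ := form2_of_sim hn hab
      obtain ⟨da, hda⟩ := conj1 U hop hia
      obtain ⟨db, hdb⟩ := conj1 U hop hjb
      obtain ⟨wa, hwa⟩ := hγ.1.2 p
      obtain ⟨wb, hwb⟩ := hγ.1.2 q
      refine ⟨.inr s₀, .inr f,
        ⟨.inl da, by rw [hop]; exact uop_rl_intro hda⟩,
        ⟨.inl wa, by rw [hop]; exact uop_rl_intro (by rw [hwa]; exact hpf)⟩,
        ⟨.inl db, by rw [hop]; exact uop_rl_intro hdb⟩,
        ⟨.inl wb, by rw [hop]; exact uop_rl_intro (by rw [hwb]; exact hqf)⟩,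
        ?_, ?_, ?_, ?_⟩
      · intro x hx; rw [hop] at hx; rw [hz]
        cases x with
        | inl x' =>
          obtain ⟨v, hveq, hv⟩ := uop_lr_elim hx
          obtain rfl := Sum.inr.inj hveq
          exact sim_zero_of_mem (G.cancel_left hv hia ▸ hi) hid
        | inr x' => exact nomatch (uop_rr (γ := γ) ▸ hx)
      · intro x hx; rw [hop] at hx; rw [hz]
        cases x with
        | inl x' =>
          obtain ⟨v, hveq, hv⟩ := uop_lr_elim hx
          obtain rfl := Sum.inr.inj hveq
          exact sim_zero_of_mem (G.cancel_left hv hjb ▸ hj) hid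
        | inr x' => exact nomatch (uop_rr (γ := γ) ▸ hx)
      · intro x hx; rw [hop] at hx; rw [hz]
        cases x with
        | inl x' =>
          obtain ⟨v, hveq, hv⟩ := uop_lr_elim hx
          obtain rfl := Sum.inr.inj hveq
          exact sim_zero_of_mem ((hn p x' f a' hpf hv).mp hp) hid
        | inr x' => exact nomatch (uop_rr (γ := γ) ▸ hx)
      · intro x hx; rw [hop] at hx; rw [hz]
        cases x with
        | inl x' =>
          obtain ⟨v, hveq, hv⟩ := uop_lr_elim hx
          obtain rfl := Sum.inr.inj hveq
          exact sim_zero_of_mem ((hn q x' f b' hqf hv).mp hq) hid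
        | inr x' => exact nomatch (uop_rr (γ := γ) ▸ hx)

end S16
namespace S16
open GPEA Sum

variable {P : Type*} {G : GPEA P} {I : Set P} {γ : P → P}

lemma fwd (hid : G.IsIdeal I) (U : PEA (P ⊕ P)) (hop : U.toGPEA.oplus = uop G γ)
    (hz : U.toGPEA.zero = Sum.inl G.zero)
    (hR : U.toGPEA.IsRieszCong (rstar (G.simI I))) : G.GCR I := by
  intro a b hab
  obtain ⟨c, d, hca, had, hcb, hbd, k1, k2, k3, k4⟩ :=
    hR.2.2.2.2 (.inl a) (.inl b) hab
  obtain ⟨z, hzd⟩ := had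
  obtain ⟨x, hx⟩ := (U.toGPEA.conj hzd).1
  obtain ⟨z', hzd'⟩ := hbd
  obtain ⟨x₂, hx₂⟩ := (U.toGPEA.conj hzd').1
  rw [hop] at hx hx₂
  cases d with
  | inr y =>
    cases x with
    | inl x' =>
      obtain ⟨t, ht, -⟩ := uop_ll_elim hx
      cases ht
    | inr x₀ =>
      have hk := k3 (.inr x₀) (by rw [hop]; exact hx)
      rw [hz] at hk
      exact False.elim hk
  | inl s₀ =>
    cases x with
    | inr x₀ =>
      obtain ⟨v, hv, -⟩ := uop_rl_elim hx
      cases hv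
    | inl i₀ =>
      obtain ⟨t, ht, hio⟩ := uop_ll_elim hx
      obtain rfl := Sum.inl.inj ht
      cases x₂ with
      | inr x₂' =>
        obtain ⟨v, hv, -⟩ := uop_rl_elim hx₂
        cases hv
      | inl j₀ =>
        obtain ⟨t₂, ht₂, hjo⟩ := uop_ll_elim hx₂
        obtain rfl := Sum.inl.inj ht₂
        have h1 := k3 (.inl i₀) (by rw [hop]; exact uop_ll_intro hio)
        have h2 := k4 (.inl j₀) (by rw [hop]; exact uop_ll_intro hjo)
        rw [hz] at h1 h2
        exact ⟨i₀, mem_of_sim_zero h1, j₀, mem_of_sim_zero h2, _, hio, hjo⟩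

end S16

theorem stmt16 {P : Type*} (G : GPEA P) (γ : P → P) (hγ : G.IsUnitizing γ)
    (I : Set P) (hI : G.IsNormalRieszIdeal I) (hγI : ∀ a : P, a ∈ I ↔ γ a ∈ I)
    (U : PEA (P ⊕ P)) (hop : U.toGPEA.oplus = uop G γ)
    (hz : U.toGPEA.zero = Sum.inl G.zero) (ho : U.one = Sum.inr G.zero) :
    U.toGPEA.IsRieszCong (rstar (G.simI I)) ↔ G.GCR I := by
  have hid := hI.1.1
  have hn : S16.Nrm G I := hI.1.2
  have hr1 := hI.2.1
  have hr2 := hI.2.2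
  constructor
  · intro hR
    exact S16.fwd hid U hop hz hR
  · intro hgcr
    refine ⟨⟨S16.req hid hn hr1, ?_⟩, ?_, ?_, ?_, ?_⟩
    · intro a b a₁ b₁ s s₁ h h₁ hA hB
      rw [hop] at h h₁
      exact S16.bwd_cong hid hn hr1 hgcr hγ hγI h h₁ hA hB
    · intro a b s h
      rw [hop] at h
      obtain ⟨p1, p2⟩ := S16.bwd_c3 hid hn hr1 hr2 hγ hγI h
      constructor
      · intro a₁ ha₁
        obtain ⟨b₁, hb₁, t, ht⟩ := p1 a₁ ha₁
        exact ⟨b₁, hb₁, t, by rw [hop]; exact ht⟩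
      · intro b₂ hb₂
        obtain ⟨a₂, ha₂, t, ht⟩ := p2 b₂ hb₂
        exact ⟨a₂, ha₂, t, by rw [hop]; exact ht⟩
    · intro a b a₁ b₁ s t hab hd
      rw [hop] at hd
      exact S16.bwd_c4 hid hn hr1 hgcr hγ hγI hab hd
    · intro a b c s h ha
      rw [hop] at h
      obtain ⟨a₁, a₂, h1, h2, h12⟩ := S16.bwd_c5 hid hn hr1 hr2 hγ hγI h ha
      exact ⟨a₁, a₂, h1, h2, by rw [hop]; exact h12⟩
    · exact S16.bwd_cr hid hn hgcr hγ U hop hz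
end

section
/- If I is a normal Riesz γ-ideal in a GPEA P, then I is a normal Riesz ideal in the γ-unitization U of P iff ∼_I satisfies the condition (GCR) on P: a ∼_I b implies there exist i, j ∈ I with i ⊕ a = j ⊕ b. -/
open scoped Classical

section Stmt17Aux

namespace GPEA

variable {P : Type*}

lemma conjL' (G : GPEA P) {a b s : P} (h : G.oplus a b = some s) :
    ∃ c, G.oplus c a = some s := (G.conj h).1

lemma conjR' (G : GPEA P) {a b s : P} (h : G.oplus a b = some s) :
    ∃ d, G.oplus b d = some s := (G.conj h).2

lemma le_of_suffix (G : GPEA P) {d v m : P} (h : G.oplus d v = some m) : G.le v m :=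
  G.conjR' h

lemma le_of_prefix (G : GPEA P) {d v m : P} (h : G.oplus v d = some m) : G.le v m :=
  ⟨d, h⟩

lemma le_flip (G : GPEA P) {v m : P} (h : G.le v m) : ∃ w, G.oplus w v = some m := by
  obtain ⟨c, hc⟩ := h; exact G.conjL' hc

lemma le_trans' (G : GPEA P) {a b c : P} (h1 : G.le a b) (h2 : G.le b c) : G.le a c := by
  obtain ⟨x, hx⟩ := h1; obtain ⟨y, hy⟩ := h2
  obtain ⟨z, _, hz2⟩ := G.assoc₁ hx hy
  exact ⟨z, hz2⟩

section Ideal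

variable (G : GPEA P) {I : Set P}

lemma idl_mem_of_le (hId : G.IsIdeal I) {v m : P} (hm : m ∈ I) (h : G.le v m) : v ∈ I :=
  hId.2.1 m hm v h

lemma idl_sum_mem (hId : G.IsIdeal I) {a b s : P} (ha : a ∈ I) (hb : b ∈ I)
    (h : G.oplus a b = some s) : s ∈ I := hId.2.2 a ha b hb s h

lemma idl_zero_mem (hId : G.IsIdeal I) : G.zero ∈ I := by
  obtain ⟨a, ha⟩ := hId.1
  exact hId.2.1 a ha G.zero ⟨a, G.zero_oplus a⟩

variable (hI : G.IsNormalRieszIdeal I)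

lemma nrm (hI : G.IsNormalRieszIdeal I) {a b c s : P} (h1 : G.oplus a c = some s)
    (h2 : G.oplus c b = some s) : a ∈ I ↔ b ∈ I := hI.1.2 a b c s h1 h2

/-- move an ideal summand from the right to the left -/
lemma t5 (hI : G.IsNormalRieszIdeal I) {i X m : P} (hi : i ∈ I)
    (h : G.oplus X i = some m) : ∃ i' ∈ I, G.oplus i' X = some m := by
  obtain ⟨c, hc⟩ := G.conjL' h
  exact ⟨c, (G.nrm hI hc h).mpr hi, hc⟩

/-- move an ideal summand from the left to the right -/
lemma t5' (hI : G.IsNormalRieszIdeal I) {i X m : P} (hi : i ∈ I)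
    (h : G.oplus i X = some m) : ∃ i' ∈ I, G.oplus X i' = some m := by
  obtain ⟨d, hd⟩ := G.conjR' h
  exact ⟨d, (G.nrm hI h hd).mp hi, hd⟩

lemma simI_refl (hId : G.IsIdeal I) (a : P) : G.simI I a a :=
  ⟨G.zero, G.idl_zero_mem hId, G.zero, G.idl_zero_mem hId, a, G.oplus_zero a, G.oplus_zero a⟩

lemma simI_symm {a b : P} (h : G.simI I a b) : G.simI I b a := by
  obtain ⟨i, hi, j, hj, d, h1, h2⟩ := h
  exact ⟨j, hj, i, hi, d, h2, h1⟩

/-- `d⊕i = a` with `i ∈ I` gives `a ∼ d`. -/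
lemma simI_of_tail (hId : G.IsIdeal I) {d i a : P} (hi : i ∈ I)
    (h : G.oplus d i = some a) : G.simI I a d :=
  ⟨i, hi, G.zero, G.idl_zero_mem hId, d, h, G.oplus_zero d⟩

/-- transitivity of `∼_I` for normal Riesz ideals -/
lemma simI_trans (hI : G.IsNormalRieszIdeal I) {a b c : P}
    (hab : G.simI I a b) (hbc : G.simI I b c) : G.simI I a c := by
  obtain ⟨i, hi, j, hj, d, hdi, hdj⟩ := hab
  obtain ⟨k, hk, l, hl, e, hek, hel⟩ := hbc
  -- b = d⊕j = e⊕k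
  obtain ⟨p, hp, q, hq, hpe, hqk, t, hpq, hjt⟩ :=
    hI.2.1 j hj e k b hek (G.le_of_suffix hdj)
  -- e = e₁ ⊕ p
  obtain ⟨e₁, he₁⟩ := G.le_flip hpe
  -- k = q ⊕ κ
  obtain ⟨κ, hκ⟩ := hqk
  -- m := p ⊕ k, e₁ ⊕ m = b
  obtain ⟨m, hm, he₁m⟩ := G.assoc₁ he₁ hek
  -- p⊕q = t and t⊕κ = m
  obtain ⟨t', hpq', ht'κ⟩ := G.assoc₂ hκ hm
  have htt : t' = t := by
    have := hpq'.symm.trans hpq; exact Option.some_injective _ this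
  subst htt
  -- j ⊕ τ = t
  obtain ⟨τ, hτ⟩ := hjt
  -- m = j ⊕ w
  obtain ⟨w, hw, hjw⟩ := G.assoc₁ hτ ht'κ
  -- m = w' ⊕ j
  obtain ⟨w', hw'⟩ := G.conjL' hjw
  have hmI : m ∈ I := G.idl_sum_mem hI.1.1 hp hk hm
  have hw'I : w' ∈ I := G.idl_mem_of_le hI.1.1 hmI ⟨j, hw'⟩
  -- b = (e₁⊕w')⊕j
  obtain ⟨E, hE, hEj⟩ := G.assoc₂ hw' he₁m
  have hdE : d = E := G.cancel_right hdj hEj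
  subst hdE
  -- a = e₁⊕(w'⊕i)
  obtain ⟨u, hu, ha⟩ := G.assoc₁ hE hdi
  have huI : u ∈ I := G.idl_sum_mem hI.1.1 hw'I hi hu
  -- c = e₁⊕(p⊕l)
  obtain ⟨v, hv, hc⟩ := G.assoc₁ he₁ hel
  have hvI : v ∈ I := G.idl_sum_mem hI.1.1 hp hl hv
  exact ⟨u, huI, v, hvI, e₁, ha, hc⟩

/-- two prefixes of the same element with ideal tails are `∼_I`-equivalent -/
lemma simI_of_common (hI : G.IsNormalRieszIdeal I) {A B α β Ω : P}
    (hα : α ∈ I) (hβ : β ∈ I) (h1 : G.oplus A α = some Ω) (h2 : G.oplus B β = some Ω) :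
    G.simI I A B :=
  G.simI_trans hI (G.simI_symm (G.simI_of_tail hI.1.1 hα h1))
    (G.simI_of_tail hI.1.1 hβ h2)

end Ideal

end GPEA

end Stmt17Aux
section Stmt17Aux2

namespace GPEA

variable {P : Type*} (G : GPEA P) {I : Set P}

/-- the `C5'`-style splitting property of `∼_I` for normal Riesz ideals -/
lemma simI_split (hI : G.IsNormalRieszIdeal I) {a b c s : P}
    (hbc : G.oplus b c = some s) (has : G.simI I a s) :
    ∃ a₁ a₂, G.simI I a₁ b ∧ G.simI I a₂ c ∧ G.oplus a₁ a₂ = some a := by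
  obtain ⟨i, hi, j, hj, d, hdi, hdj⟩ := has
  obtain ⟨p, hp, q, hq, hpb, hqc, t, hpq, hjt⟩ :=
    hI.2.1 j hj b c s hbc (G.le_of_suffix hdj)
  obtain ⟨b₁, hb₁⟩ := G.le_flip hpb
  obtain ⟨c₂, hc₂⟩ := hqc
  -- m := p⊕c, b₁⊕m = s
  obtain ⟨m, hm, hb₁m⟩ := G.assoc₁ hb₁ hbc
  -- p⊕q = t, t⊕c₂ = m
  obtain ⟨t', hpq', htc₂⟩ := G.assoc₂ hc₂ hm
  have htt : t' = t := Option.some_injective _ (hpq'.symm.trans hpq)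
  subst htt
  obtain ⟨τ, hτ⟩ := hjt
  -- m = j⊕w
  obtain ⟨w, _, hjw⟩ := G.assoc₁ hτ htc₂
  -- m = w'⊕j
  obtain ⟨w', hw'⟩ := G.conjL' hjw
  -- s = (b₁⊕w')⊕j
  obtain ⟨D, hD, hDj⟩ := G.assoc₂ hw' hb₁m
  have hdD : d = D := G.cancel_right hdj hDj
  subst hdD
  -- a = b₁⊕(w'⊕i)
  obtain ⟨a₂, ha₂, ha⟩ := G.assoc₁ hD hdi
  refine ⟨b₁, a₂, G.simI_symm (G.simI_of_tail hI.1.1 hp hb₁), ?_, ha⟩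
  -- a₂ = w'⊕i ∼ w' ∼ c
  have h1 : G.simI I a₂ w' := G.simI_of_tail hI.1.1 hi ha₂
  -- w'⊕j = m = p⊕c = c⊕p₂
  obtain ⟨p₂, hp₂I, hp₂⟩ := G.t5' hI hp hm
  exact G.simI_trans hI h1 (G.simI_of_common hI hj hp₂I hw' (by
    -- need : G.oplus c p₂ = some m
    exact hp₂))

end GPEA

end Stmt17Aux2
section Stmt17Aux3

namespace GPEA

variable {P : Type*} (G : GPEA P) {I : Set P}

/-- mirror version of (GCR): common right extension -/
lemma gcr_right (hI : G.IsNormalRieszIdeal I) (hG : G.GCR I) {A B : P}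
    (h : G.simI I A B) :
    ∃ i ∈ I, ∃ j ∈ I, ∃ s, G.oplus A i = some s ∧ G.oplus B j = some s := by
  obtain ⟨i₀, hi₀, j₀, hj₀, s₀, h1, h2⟩ := hG A B h
  obtain ⟨i₂, hi₂, hi₂'⟩ := G.t5' hI hi₀ h1
  obtain ⟨j₂, hj₂, hj₂'⟩ := G.t5' hI hj₀ h2
  exact ⟨i₂, hi₂, j₂, hj₂, s₀, hi₂', hj₂'⟩

/-- Key lemma (S3 core): if `a = x₀⊕i` with `i ∈ I` and `b = e⊕x₀`, then
some ideal right extension of `b` has `a` as a right divisor. -/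
lemma ls3 (hI : G.IsNormalRieszIdeal I) (hG : G.GCR I) {i x₀ a e b : P} (hi : i ∈ I)
    (h1 : G.oplus x₀ i = some a) (h2 : G.oplus e x₀ = some b) :
    ∃ j ∈ I, ∃ Ξ, G.oplus b j = some Ξ ∧ ∃ f, G.oplus f a = some Ξ := by
  -- a ∼ x₀
  have hax : G.simI I a x₀ := G.simI_of_tail hI.1.1 hi h1
  obtain ⟨φ, hφ, ψ, hψ, w, hφa, hψx⟩ := hG a x₀ hax
  -- R2 clause 2 at (ψ, w) with y := x₀, b := e
  obtain ⟨k, hk, hke, hprop⟩ :=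
    (hI.2.2 ψ hψ w (G.le_of_prefix hψx)).2 e x₀ b hψx h2
  obtain ⟨z, hz⟩ := G.le_flip hke
  obtain ⟨Θ, hΘ⟩ := hprop z hz
  -- Θ = (z⊕φ)⊕a
  obtain ⟨M, _, hMa⟩ := G.assoc₂ hφa hΘ
  -- w = x₀⊕ψ₂
  obtain ⟨ψ₂, hψ₂I, hψ₂⟩ := G.t5' hI hψ hψx
  -- Θ = (z⊕x₀)⊕ψ₂
  obtain ⟨Z, hZ, hZψ₂⟩ := G.assoc₂ hψ₂ hΘ
  -- b = z⊕(k⊕x₀)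
  obtain ⟨K, hK, hzK⟩ := G.assoc₁ hz h2
  -- K = x₀⊕k₂
  obtain ⟨k₂, hk₂I, hk₂⟩ := G.t5' hI hk hK
  -- b = (z⊕x₀)⊕k₂
  obtain ⟨Z', hZ', hZ'k₂⟩ := G.assoc₂ hk₂ hzK
  have hZZ : Z' = Z := Option.some_injective _ (hZ'.symm.trans hZ)
  rw [hZZ] at hZ'k₂
  -- Θ ∼ b
  have hΘb : G.simI I Θ b := ⟨ψ₂, hψ₂I, k₂, hk₂I, Z, hZψ₂, hZ'k₂⟩
  obtain ⟨α, hα, β, hβ, Ξ, hαΘ, hβb⟩ := hG Θ b hΘb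
  -- Ξ = (α⊕M)⊕a
  obtain ⟨N, _, hNa⟩ := G.assoc₂ hMa hαΘ
  -- b⊕j = Ξ
  obtain ⟨j, hjI, hj⟩ := G.t5' hI hβ hβb
  exact ⟨j, hjI, Ξ, hj, N, hNa⟩

/-- Mirror of `ls3`: if `A = ι⊕η` with `ι ∈ I` and `B = η⊕c`, then
some ideal left extension of `B` has `A` as a left divisor. -/
lemma ls3' (hI : G.IsNormalRieszIdeal I) (hG : G.GCR I) {ι η A c B : P} (hι : ι ∈ I)
    (h1 : G.oplus ι η = some A) (h2 : G.oplus η c = some B) :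
    ∃ κ ∈ I, ∃ Ξ, G.oplus κ B = some Ξ ∧ ∃ w, G.oplus A w = some Ξ := by
  -- A ∼ η
  obtain ⟨ι₂, hι₂I, hι₂⟩ := G.t5' hI hι h1
  have hAη : G.simI I A η := G.simI_of_tail hI.1.1 hι₂I hι₂
  obtain ⟨φ, hφ, ψ, hψ, w, hAφ, hηψ⟩ := G.gcr_right hI hG hAη
  -- R2 clause 1 at (ψ, w) with x := η, b := c
  obtain ⟨k₁, hk₁, hk₁c, hprop⟩ :=
    (hI.2.2 ψ hψ w (G.le_of_suffix hηψ)).1 c η B hηψ h2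
  obtain ⟨c₃, hc₃⟩ := hk₁c
  obtain ⟨Θ, hΘ⟩ := hprop c₃ hc₃
  -- Θ = A⊕(φ⊕c₃)
  obtain ⟨w₁, _, hAw₁⟩ := G.assoc₁ hAφ hΘ
  -- w = ψ₂⊕η
  obtain ⟨ψ₂, hψ₂I, hψ₂⟩ := G.t5 hI hψ hηψ
  -- Θ = ψ₂⊕(η⊕c₃)
  obtain ⟨Z, hZ, hψ₂Z⟩ := G.assoc₁ hψ₂ hΘ
  -- B = (η⊕k₁)⊕c₃
  obtain ⟨H, hH, hHc₃⟩ := G.assoc₂ hc₃ h2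
  -- H = k₂⊕η
  obtain ⟨k₂, hk₂I, hk₂⟩ := G.t5 hI hk₁ hH
  -- B = k₂⊕(η⊕c₃)
  obtain ⟨Z', hZ', hk₂Z'⟩ := G.assoc₁ hk₂ hHc₃
  have hZZ : Z' = Z := Option.some_injective _ (hZ'.symm.trans hZ)
  rw [hZZ] at hk₂Z'
  -- Θ ∼ B  (common suffix Z with ideal prefixes)
  obtain ⟨ψ₃, hψ₃I, hψ₃⟩ := G.t5' hI hψ₂I hψ₂Z
  obtain ⟨k₃, hk₃I, hk₃⟩ := G.t5' hI hk₂I hk₂Z'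
  have hΘB : G.simI I Θ B := ⟨ψ₃, hψ₃I, k₃, hk₃I, Z, hψ₃, hk₃⟩
  obtain ⟨α, hα, β, hβ, Ξ, hΘα, hBβ⟩ := G.gcr_right hI hG hΘB
  -- Ξ = A⊕(w₁⊕α)
  obtain ⟨w', _, hAw'⟩ := G.assoc₁ hAw₁ hΘα
  -- κ⊕B = Ξ
  obtain ⟨κ, hκI, hκ⟩ := G.t5 hI hβ hBβ
  exact ⟨κ, hκI, Ξ, hκ, w', hAw'⟩

end GPEA

end Stmt17Aux3
section Stmt17Aux4

namespace GPEA

variable {P : Type*} (G : GPEA P) {I : Set P}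

/-- S1 core: splitting for `R1` in the unitization, `inl`-`inr` case. -/
lemma ls1 (hI : G.IsNormalRieszIdeal I) (hG : G.GCR I) {i s e a b : P} (hi : i ∈ I)
    (h1 : G.oplus s i = some e) (h2 : G.oplus s a = some b) :
    ∃ j ∈ I, ∃ k ∈ I, G.le j a ∧ (∃ y, G.oplus b k = some y) ∧
      ∃ t, G.oplus j k = some t ∧ G.le i t := by
  -- b = a'⊕s
  obtain ⟨a', ha'⟩ := G.conjL' h2
  obtain ⟨k₀, hk₀I, Ξ, hbk₀, f, hfe⟩ := G.ls3 hI hG hi h1 ha'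
  -- e⊕r = Ξ
  obtain ⟨r, hr⟩ := G.conjR' hfe
  -- Ξ = s⊕(i⊕r)
  obtain ⟨m, hm, hsm⟩ := G.assoc₁ h1 hr
  -- Ξ = s⊕(a⊕k₀)
  obtain ⟨n, hn, hsn⟩ := G.assoc₁ h2 hbk₀
  have hmn : m = n := G.cancel_left hsm hsn
  subst hmn
  -- i ≤ m, m = a⊕k₀ : R1
  obtain ⟨j, hjI, k, hkI, hja, hkk₀, t, hjk, hit⟩ :=
    hI.2.1 i hi a k₀ m hn (G.le_of_prefix hm)
  refine ⟨j, hjI, k, hkI, hja, ?_, t, hjk, hit⟩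
  -- b⊕k defined since k ≤ k₀
  obtain ⟨ρ, hρ⟩ := hkk₀
  obtain ⟨y, hy, _⟩ := G.assoc₂ hρ hbk₀
  exact ⟨y, hy⟩

/-- mirror of `ls1`. -/
lemma ls1' (hI : G.IsNormalRieszIdeal I) (hG : G.GCR I) {i s e A B : P} (hi : i ∈ I)
    (h1 : G.oplus i s = some e) (h2 : G.oplus A s = some B) :
    ∃ j ∈ I, ∃ k ∈ I, G.le j A ∧ (∃ y, G.oplus k B = some y) ∧
      ∃ t, G.oplus k j = some t ∧ G.le i t := by
  -- B = s⊕a''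
  obtain ⟨a'', ha''⟩ := G.conjR' h2
  obtain ⟨κ, hκI, Ξ, hκB, w, hew⟩ := G.ls3' hI hG hi h1 ha''
  -- Ξ = w''⊕e
  obtain ⟨w'', hw''⟩ := G.conjL' hew
  -- Ξ = (w''⊕i)⊕s
  obtain ⟨W, hW, hWs⟩ := G.assoc₂ h1 hw''
  -- Ξ = (κ⊕A)⊕s
  obtain ⟨V, hV, hVs⟩ := G.assoc₂ h2 hκB
  have hWV : W = V := G.cancel_right hWs hVs
  subst hWV
  -- i ≤ W, W = κ⊕A : R1
  obtain ⟨p, hpI, q, hqI, hpκ, hqA, t, hpq, hit⟩ :=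
    hI.2.1 i hi κ A W hV (G.le_of_suffix hW)
  refine ⟨q, hqI, p, hpI, hqA, ?_, t, hpq, hit⟩
  -- p⊕B defined since p ≤ κ (suffix form)
  obtain ⟨κ₁, hκ₁⟩ := G.le_flip hpκ
  obtain ⟨y, hy, _⟩ := G.assoc₁ hκ₁ hκB
  exact ⟨y, hy⟩

end GPEA

end Stmt17Aux4
section Stmt17Aux5

namespace GPEA

variable {P : Type*} (G : GPEA P) {γ : P → P}

lemma gexact (hγ : G.IsUnitizing γ) {a b c : P}
    (h : G.oplus (γ a) (γ b) = some (γ c)) : G.oplus a b = some c := by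
  obtain ⟨t, ht⟩ := hγ.2.2.1 a b ⟨γ c, h⟩
  have := hγ.2.1 a b t ht
  have hc : γ t = γ c := Option.some_injective _ (this.symm.trans h)
  rwa [hγ.1.1 hc] at ht

lemma gle (hγ : G.IsUnitizing γ) {a b : P} (h : G.le (γ a) (γ b)) : G.le a b := by
  obtain ⟨c, hc⟩ := h
  obtain ⟨C, rfl⟩ := hγ.1.2 c
  exact ⟨C, G.gexact hγ hc⟩

variable {I : Set P}

/-- S2 core (γ-converted mirror of `ls1`). -/
lemma ls2 (hγ : G.IsUnitizing γ) (hγI : ∀ a : P, a ∈ I ↔ γ a ∈ I)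
    (hI : G.IsNormalRieszIdeal I) (hG : G.GCR I) {i s e a b : P} (hi : i ∈ I)
    (h1 : G.oplus s i = some e) (h2 : G.oplus (γ b) s = some a) :
    ∃ j ∈ I, ∃ k ∈ I, (∃ y, G.oplus a j = some y) ∧ G.le k b ∧
      ∃ t, G.oplus j k = some t ∧ G.le i t := by
  -- γi⊕s defined
  obtain ⟨e', he'⟩ := (hγ.2.2.2 i s).mpr ⟨e, h1⟩
  have hgi : γ i ∈ I := (hγI i).mp hi
  obtain ⟨j', hj'I, k', hk'I, hj'gb, ⟨y, hy⟩, t', hk'j', hgit'⟩ :=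
    G.ls1' hI hG hgi he' h2
  -- j-final := D' with γD' = k'
  obtain ⟨D', hD'⟩ := hγ.1.2 k'
  have hD'I : D' ∈ I := (hγI D').mpr (hD' ▸ hk'I)
  -- k-final := J' with γJ' = j'
  obtain ⟨J', hJ'⟩ := hγ.1.2 j'
  have hJ'I : J' ∈ I := (hγI J').mpr (hJ' ▸ hj'I)
  refine ⟨D', hD'I, J', hJ'I, ?_, ?_, ?_⟩
  · -- a⊕D' defined
    exact (hγ.2.2.2 D' a).mp ⟨y, by rw [hD']; exact hy⟩
  · -- J' ≤ b
    apply G.gle hγ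
    rw [hJ']; exact hj'gb
  · -- t-final
    have hk'j'' : G.oplus (γ D') (γ J') = some t' := by rw [hD', hJ']; exact hk'j'
    obtain ⟨tf, htf⟩ := hγ.2.2.1 D' J' ⟨t', hk'j''⟩
    have hgt : γ tf = t' := by
      have := hγ.2.1 D' J' tf htf
      exact Option.some_injective _ (this.symm.trans hk'j'')
    refine ⟨tf, htf, ?_⟩
    -- i ≤ tf from γi ≤ t' = γ tf
    apply G.gle hγ
    rw [hgt]; exact hgit'

end GPEA

end Stmt17Aux5
section Stmt17Aux6

namespace GPEA

variable {P : Type*} (G : GPEA P) (γ : P → P)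

lemma uop_inl_inl (a b : P) :
    uop G γ (.inl a) (.inl b) = (G.oplus a b).map .inl := rfl

lemma uop_inr_inr (a b : P) : uop G γ (.inr a) (.inr b) = none := rfl

lemma uop_inl_inl_some {a b : P} {v : P ⊕ P} (h : uop G γ (.inl a) (.inl b) = some v) :
    ∃ s, G.oplus a b = some s ∧ v = .inl s := by
  rw [uop_inl_inl] at h
  cases hab : G.oplus a b with
  | none => rw [hab] at h; simp at h
  | some s => rw [hab] at h; simp at h; exact ⟨s, rfl, h.symm⟩

lemma uop_inl_inl_of {a b s : P} (h : G.oplus a b = some s) :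
    uop G γ (.inl a) (.inl b) = some (.inl s) := by
  rw [uop_inl_inl, h]; rfl

lemma uop_inl_inr_some {a b : P} {v : P ⊕ P} (h : uop G γ (.inl a) (.inr b) = some v) :
    ∃ d, G.oplus d a = some b ∧ v = .inr d := by
  by_cases hL : G.leL a b
  · have : uop G γ (.inl a) (.inr b) = some (.inr (Classical.choose hL)) := by
      simp only [uop, dif_pos hL]
    rw [this] at h
    exact ⟨Classical.choose hL, Classical.choose_spec hL, (Option.some_injective _ h).symm⟩
  · have : uop G γ (.inl a) (.inr b) = none := by simp only [uop, dif_neg hL]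
    rw [this] at h; exact absurd h (by simp)

lemma uop_inl_inr_of {a b d : P} (h : G.oplus d a = some b) :
    uop G γ (.inl a) (.inr b) = some (.inr d) := by
  have hL : G.leL a b := ⟨d, h⟩
  have h1 : uop G γ (.inl a) (.inr b) = some (.inr (Classical.choose hL)) := by
    simp only [uop, dif_pos hL]
  rw [h1]
  congr 2
  exact G.cancel_right (Classical.choose_spec hL) h

lemma uop_inr_inl_some {a b : P} {v : P ⊕ P} (h : uop G γ (.inr a) (.inl b) = some v) :
    ∃ c, G.oplus (γ b) c = some a ∧ v = .inr c := by
  by_cases hL : G.le (γ b) a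
  · have : uop G γ (.inr a) (.inl b) = some (.inr (Classical.choose hL)) := by
      simp only [uop, dif_pos hL]
    rw [this] at h
    exact ⟨Classical.choose hL, Classical.choose_spec hL, (Option.some_injective _ h).symm⟩
  · have : uop G γ (.inr a) (.inl b) = none := by simp only [uop, dif_neg hL]
    rw [this] at h; exact absurd h (by simp)

lemma uop_inr_inl_of {a b c : P} (h : G.oplus (γ b) c = some a) :
    uop G γ (.inr a) (.inl b) = some (.inr c) := by
  have hL : G.le (γ b) a := ⟨c, h⟩
  have h1 : uop G γ (.inr a) (.inl b) = some (.inr (Classical.choose hL)) := by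
    simp only [uop, dif_pos hL]
  rw [h1]
  congr 2
  exact G.cancel_left (Classical.choose_spec hL) h

end GPEA

end Stmt17Aux6
section Stmt17Aux6b

namespace GPEA

variable {P : Type*} (G : GPEA P) (γ : P → P)

lemma uop_inl_inl_some' {a b s : P} (h : uop G γ (.inl a) (.inl b) = some (.inl s)) :
    G.oplus a b = some s := by
  obtain ⟨s', hs', hv⟩ := G.uop_inl_inl_some γ h
  have hss : s = s' := by simpa using hv
  rwa [← hss] at hs'

lemma uop_inl_inl_ne {a b z : P} (h : uop G γ (.inl a) (.inl b) = some (.inr z)) :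
    False := by
  obtain ⟨s', _, hv⟩ := G.uop_inl_inl_some γ h
  simp at hv

lemma uop_inl_inr_some' {a b d : P} (h : uop G γ (.inl a) (.inr b) = some (.inr d)) :
    G.oplus d a = some b := by
  obtain ⟨d', hd', hv⟩ := G.uop_inl_inr_some γ h
  have hdd : d = d' := by simpa using hv
  rwa [← hdd] at hd'

lemma uop_inl_inr_ne {a b z : P} (h : uop G γ (.inl a) (.inr b) = some (.inl z)) :
    False := by
  obtain ⟨d', _, hv⟩ := G.uop_inl_inr_some γ h
  simp at hv

lemma uop_inr_inl_some' {a b c : P} (h : uop G γ (.inr a) (.inl b) = some (.inr c)) :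
    G.oplus (γ b) c = some a := by
  obtain ⟨c', hc', hv⟩ := G.uop_inr_inl_some γ h
  have hcc : c = c' := by simpa using hv
  rwa [← hcc] at hc'

lemma uop_inr_inl_ne {a b z : P} (h : uop G γ (.inr a) (.inl b) = some (.inl z)) :
    False := by
  obtain ⟨c', _, hv⟩ := G.uop_inr_inl_some γ h
  simp at hv

end GPEA

end Stmt17Aux6b
section Stmt17Aux7

namespace GPEA

variable {P : Type*} (G : GPEA P) (γ : P → P) (U : PEA (P ⊕ P))

lemma uleU_ll (hop : U.toGPEA.oplus = uop G γ) {x y : P} :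
    U.toGPEA.le (Sum.inl x) (Sum.inl y) ↔ G.le x y := by
  constructor
  · rintro ⟨c, hc⟩
    rw [hop] at hc
    cases c with
    | inl c₀ =>
      obtain ⟨s, hs, hv⟩ := G.uop_inl_inl_some γ hc
      cases hv; exact ⟨c₀, hs⟩
    | inr c₀ =>
      obtain ⟨d, _, hv⟩ := G.uop_inl_inr_some γ hc
      exact absurd hv (by simp)
  · rintro ⟨c, hc⟩
    exact ⟨Sum.inl c, by rw [hop]; exact G.uop_inl_inl_of γ hc⟩

lemma uleU_lr (hop : U.toGPEA.oplus = uop G γ) {x y : P} :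
    U.toGPEA.le (Sum.inl x) (Sum.inr y) ↔ ∃ e, G.oplus y x = some e := by
  constructor
  · rintro ⟨c, hc⟩
    rw [hop] at hc
    cases c with
    | inl c₀ =>
      obtain ⟨s, _, hv⟩ := G.uop_inl_inl_some γ hc
      exact absurd hv (by simp)
    | inr c₀ =>
      obtain ⟨d, hd, hv⟩ := G.uop_inl_inr_some γ hc
      cases hv; exact ⟨c₀, hd⟩
  · rintro ⟨e, he⟩
    exact ⟨Sum.inr e, by rw [hop]; exact G.uop_inl_inr_of γ he⟩

variable {I : Set P}

lemma unitization_ideal (hop : U.toGPEA.oplus = uop G γ) (hI : G.IsNormalRieszIdeal I) :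
    U.toGPEA.IsIdeal (Sum.inl '' I) := by
  refine ⟨?_, ?_, ?_⟩
  · obtain ⟨a, ha⟩ := hI.1.1.1
    exact ⟨Sum.inl a, a, ha, rfl⟩
  · rintro _ ⟨a, ha, rfl⟩ x ⟨c, hc⟩
    rw [hop] at hc
    cases x with
    | inl x₀ =>
      cases c with
      | inl c₀ =>
        obtain ⟨s, hs, hv⟩ := G.uop_inl_inl_some γ hc
        have : s = a := by cases hv; rfl
        subst this
        exact ⟨x₀, G.idl_mem_of_le hI.1.1 ha ⟨c₀, hs⟩, rfl⟩
      | inr c₀ =>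
        obtain ⟨d, _, hv⟩ := G.uop_inl_inr_some γ hc
        exact absurd hv (by simp)
    | inr x₀ =>
      cases c with
      | inl c₀ =>
        obtain ⟨d, _, hv⟩ := G.uop_inr_inl_some γ hc
        exact absurd hv (by simp)
      | inr c₀ =>
        rw [G.uop_inr_inr γ] at hc
        exact absurd hc (by simp)
  · rintro _ ⟨a, ha, rfl⟩ _ ⟨b, hb, rfl⟩ s hs
    rw [hop] at hs
    obtain ⟨t, ht, hv⟩ := G.uop_inl_inl_some γ hs
    subst hv
    exact ⟨t, G.idl_sum_mem hI.1.1 ha hb ht, rfl⟩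

lemma unitization_normal (hop : U.toGPEA.oplus = uop G γ) (hI : G.IsNormalRieszIdeal I)
    (hγI : ∀ a : P, a ∈ I ↔ γ a ∈ I) :
    ∀ a b c s : P ⊕ P, U.toGPEA.oplus a c = some s → U.toGPEA.oplus c b = some s →
      (a ∈ Sum.inl '' I ↔ b ∈ Sum.inl '' I) := by
  intro x y c s h1 h2
  rw [hop] at h1 h2
  have memJ : ∀ z : P, ((Sum.inl z : P ⊕ P) ∈ Sum.inl '' I ↔ z ∈ I) := by
    intro z
    simp [Set.mem_image]
  have nmemJ : ∀ z : P, (Sum.inr z : P ⊕ P) ∉ Sum.inl '' I := by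
    intro z
    simp [Set.mem_image]
  cases c with
  | inl c₀ =>
    cases x with
    | inl x₀ =>
      obtain ⟨s₀, hs₀, hv⟩ := G.uop_inl_inl_some γ h1
      subst hv
      cases y with
      | inl y₀ =>
        obtain ⟨t₀, ht₀, hv⟩ := G.uop_inl_inl_some γ h2
        have : t₀ = s₀ := by cases hv; rfl
        subst this
        rw [memJ, memJ]
        exact G.nrm hI hs₀ ht₀
      | inr y₀ =>
        obtain ⟨d, _, hv⟩ := G.uop_inl_inr_some γ h2
        exact absurd hv (by simp)
    | inr x₀ =>
      obtain ⟨s₀, hs₀, hv⟩ := G.uop_inr_inl_some γ h1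
      subst hv
      cases y with
      | inl y₀ =>
        obtain ⟨t₀, _, hv⟩ := G.uop_inl_inl_some γ h2
        exact absurd hv (by simp)
      | inr y₀ =>
        simp only [iff_iff_implies_and_implies]
        constructor
        · intro h; exact absurd h (nmemJ _)
        · intro h; exact absurd h (nmemJ _)
  | inr c₀ =>
    cases x with
    | inl x₀ =>
      obtain ⟨s₀, hs₀, hv⟩ := G.uop_inl_inr_some γ h1
      subst hv
      -- hs₀ : s₀ ⊕ x₀ = c₀
      cases y with
      | inl y₀ =>
        obtain ⟨t₀, ht₀, hv⟩ := G.uop_inr_inl_some γ h2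
        have : t₀ = s₀ := by cases hv; rfl
        subst this
        -- ht₀ : γ y₀ ⊕ s₀ = c₀
        rw [memJ, memJ]
        have := G.nrm hI ht₀ hs₀
        rw [← hγI y₀] at this
        exact this.symm
      | inr y₀ =>
        rw [G.uop_inr_inr γ] at h2
        exact absurd h2 (by simp)
    | inr x₀ =>
      rw [G.uop_inr_inr γ] at h1
      exact absurd h1 (by simp)

end GPEA

end Stmt17Aux7
section Stmt17Aux8

namespace GPEA

variable {P : Type*} (G : GPEA P) (γ : P → P) (U : PEA (P ⊕ P)) {I : Set P}

lemma unitization_R1 (hop : U.toGPEA.oplus = uop G γ) (hγ : G.IsUnitizing γ)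
    (hγI : ∀ a : P, a ∈ I ↔ γ a ∈ I) (hI : G.IsNormalRieszIdeal I) (hG : G.GCR I) :
    U.toGPEA.R1 (Sum.inl '' I) := by
  rintro _ ⟨i, hi, rfl⟩ aU bU sU hab hle
  rw [hop] at hab
  cases aU with
  | inl a =>
    cases bU with
    | inl b =>
      obtain ⟨s₀, hs₀, rfl⟩ := G.uop_inl_inl_some γ hab
      have hile : G.le i s₀ := (G.uleU_ll γ U hop).mp hle
      obtain ⟨j, hj, k, hk, hja, hkb, t, hjk, hit⟩ := hI.2.1 i hi a b s₀ hs₀ hile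
      exact ⟨Sum.inl j, ⟨j, hj, rfl⟩, Sum.inl k, ⟨k, hk, rfl⟩,
        (G.uleU_ll γ U hop).mpr hja, (G.uleU_ll γ U hop).mpr hkb,
        Sum.inl t, by rw [hop]; exact G.uop_inl_inl_of γ hjk,
        (G.uleU_ll γ U hop).mpr hit⟩
    | inr b =>
      obtain ⟨s₀, hs₀, rfl⟩ := G.uop_inl_inr_some γ hab
      obtain ⟨e, he⟩ := (G.uleU_lr γ U hop).mp hle
      obtain ⟨j, hj, k, hk, hja, ⟨y, hy⟩, t, hjk, hit⟩ := G.ls1 hI hG hi he hs₀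
      exact ⟨Sum.inl j, ⟨j, hj, rfl⟩, Sum.inl k, ⟨k, hk, rfl⟩,
        (G.uleU_ll γ U hop).mpr hja, (G.uleU_lr γ U hop).mpr ⟨y, hy⟩,
        Sum.inl t, by rw [hop]; exact G.uop_inl_inl_of γ hjk,
        (G.uleU_ll γ U hop).mpr hit⟩
  | inr a =>
    cases bU with
    | inl b =>
      obtain ⟨s₀, hs₀, rfl⟩ := G.uop_inr_inl_some γ hab
      obtain ⟨e, he⟩ := (G.uleU_lr γ U hop).mp hle
      obtain ⟨j, hj, k, hk, ⟨y, hy⟩, hkb, t, hjk, hit⟩ := G.ls2 hγ hγI hI hG hi he hs₀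
      exact ⟨Sum.inl j, ⟨j, hj, rfl⟩, Sum.inl k, ⟨k, hk, rfl⟩,
        (G.uleU_lr γ U hop).mpr ⟨y, hy⟩, (G.uleU_ll γ U hop).mpr hkb,
        Sum.inl t, by rw [hop]; exact G.uop_inl_inl_of γ hjk,
        (G.uleU_ll γ U hop).mpr hit⟩
    | inr b =>
      rw [G.uop_inr_inr γ] at hab
      exact absurd hab (by simp)

lemma unitization_R2 (hop : U.toGPEA.oplus = uop G γ) (hγ : G.IsUnitizing γ)
    (hγI : ∀ a : P, a ∈ I ↔ γ a ∈ I) (hI : G.IsNormalRieszIdeal I) (hG : G.GCR I) :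
    U.toGPEA.R2 (Sum.inl '' I) := by
  rintro _ ⟨i, hi, rfl⟩ aU hle
  cases aU with
  | inl a =>
    have hia : G.le i a := (G.uleU_ll γ U hop).mp hle
    constructor
    · -- clause 1
      intro bU x s hxi hxb
      rw [hop] at hxi hxb
      cases x with
      | inr x₀ => exact (G.uop_inr_inl_ne γ hxi).elim
      | inl x₀ =>
        have ha' : G.oplus x₀ i = some a := G.uop_inl_inl_some' γ hxi
        cases bU with
        | inl b =>
          obtain ⟨s₀, hs₀, rfl⟩ := G.uop_inl_inl_some γ hxb
          obtain ⟨j, hj, hjb, hprop⟩ := (hI.2.2 i hi a hia).1 b x₀ s₀ ha' hs₀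
          refine ⟨Sum.inl j, ⟨j, hj, rfl⟩, (G.uleU_ll γ U hop).mpr hjb, ?_⟩
          intro c hc
          rw [hop] at hc
          cases c with
          | inr c₀ => exact (G.uop_inl_inr_ne γ hc).elim
          | inl c₀ =>
            obtain ⟨t, ht⟩ := hprop c₀ (G.uop_inl_inl_some' γ hc)
            exact ⟨Sum.inl t, by rw [hop]; exact G.uop_inl_inl_of γ ht⟩
        | inr b =>
          obtain ⟨e, he, rfl⟩ := G.uop_inl_inr_some γ hxb
          obtain ⟨j, hjI, Ξ, hbj, f, hfa⟩ := G.ls3 hI hG hi ha' he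
          refine ⟨Sum.inl j, ⟨j, hjI, rfl⟩, (G.uleU_lr γ U hop).mpr ⟨Ξ, hbj⟩, ?_⟩
          intro c hc
          rw [hop] at hc
          cases c with
          | inl c₀ => exact (G.uop_inl_inl_ne γ hc).elim
          | inr c₀ =>
            have hd : G.oplus b j = some c₀ := G.uop_inl_inr_some' γ hc
            have hcΞ : c₀ = Ξ := Option.some_injective _ (hd.symm.trans hbj)
            subst hcΞ
            exact ⟨Sum.inr f, by rw [hop]; exact G.uop_inl_inr_of γ hfa⟩
    · -- clause 2
      intro bU y s hiy hby
      rw [hop] at hiy hby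
      cases y with
      | inr y₀ => exact (G.uop_inl_inr_ne γ hiy).elim
      | inl y₀ =>
        have ha' : G.oplus i y₀ = some a := G.uop_inl_inl_some' γ hiy
        cases bU with
        | inl b =>
          obtain ⟨s₀, hs₀, rfl⟩ := G.uop_inl_inl_some γ hby
          obtain ⟨k, hk, hkb, hprop⟩ := (hI.2.2 i hi a hia).2 b y₀ s₀ ha' hs₀
          refine ⟨Sum.inl k, ⟨k, hk, rfl⟩, (G.uleU_ll γ U hop).mpr hkb, ?_⟩
          intro z hz
          rw [hop] at hz
          cases z with
          | inr z₀ => exact (G.uop_inr_inl_ne γ hz).elim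
          | inl z₀ =>
            obtain ⟨t, ht⟩ := hprop z₀ (G.uop_inl_inl_some' γ hz)
            exact ⟨Sum.inl t, by rw [hop]; exact G.uop_inl_inl_of γ ht⟩
        | inr b =>
          obtain ⟨c, hc, rfl⟩ := G.uop_inr_inl_some γ hby
          have hγa : G.oplus (γ i) (γ y₀) = some (γ a) := hγ.2.1 i y₀ a ha'
          have hγiI : γ i ∈ I := (hγI i).mp hi
          obtain ⟨κ, hκI, Ξ, hκb, w, hgaw⟩ := G.ls3' hI hG hγiI hγa hc
          obtain ⟨K, hK⟩ := hγ.1.2 κ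
          have hKI : K ∈ I := (hγI K).mpr (by rw [hK]; exact hκI)
          have hκb' : G.oplus (γ K) b = some Ξ := by rw [hK]; exact hκb
          refine ⟨Sum.inl K, ⟨K, hKI, rfl⟩, ?_, ?_⟩
          · exact (G.uleU_lr γ U hop).mpr ((hγ.2.2.2 K b).mp ⟨Ξ, hκb'⟩)
          · intro z hz
            rw [hop] at hz
            cases z with
            | inl z₀ => exact (G.uop_inl_inl_ne γ hz).elim
            | inr z₀ =>
              have hc' : G.oplus (γ K) b = some z₀ := G.uop_inr_inl_some' γ hz
              have hzΞ : z₀ = Ξ := Option.some_injective _ (hc'.symm.trans hκb')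
              subst hzΞ
              exact ⟨Sum.inr w, by rw [hop]; exact G.uop_inr_inl_of γ hgaw⟩
  | inr a =>
    obtain ⟨y₀', hy₀'⟩ := (G.uleU_lr γ U hop).mp hle
    constructor
    · -- clause 1
      intro bU x s hxi hxb
      rw [hop] at hxi hxb
      cases x with
      | inl x₀ => exact (G.uop_inl_inl_ne γ hxi).elim
      | inr x₀ =>
        have hc₁ : G.oplus (γ i) a = some x₀ := G.uop_inr_inl_some' γ hxi
        cases bU with
        | inr b =>
          rw [G.uop_inr_inr γ] at hxb
          exact absurd hxb (by simp)
        | inl b =>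
          obtain ⟨c, hc, rfl⟩ := G.uop_inr_inl_some γ hxb
          -- hc : γ b ⊕ c = x₀
          have hsim : G.simI I a x₀ := by
            obtain ⟨ι₂, hι₂I, hι₂⟩ := G.t5' hI ((hγI i).mp hi) hc₁
            exact ⟨G.zero, G.idl_zero_mem hI.1.1, ι₂, hι₂I, a, G.oplus_zero a, hι₂⟩
          obtain ⟨a₁, a₂, hsim1, hsim2, ha12⟩ := G.simI_split hI hc hsim
          obtain ⟨u, huI, v, hvI, d, hdu, hdv⟩ := hsim1
          obtain ⟨D, hD⟩ := hγ.1.2 d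
          obtain ⟨V, hV⟩ := hγ.1.2 v
          have hVI : V ∈ I := (hγI V).mpr (by rw [hV]; exact hvI)
          have hDV : G.oplus D V = some b := G.gexact hγ (by rw [hD, hV]; exact hdv)
          obtain ⟨V₂, hV₂I, hV₂⟩ := G.t5 hI hVI hDV
          refine ⟨Sum.inl V₂, ⟨V₂, hV₂I, rfl⟩,
            (G.uleU_ll γ U hop).mpr (G.le_of_prefix hV₂), ?_⟩
          intro cU hcU
          rw [hop] at hcU
          cases cU with
          | inr c₀ => exact (G.uop_inl_inr_ne γ hcU).elim
          | inl c₀ =>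
            have hb' : G.oplus V₂ c₀ = some b := G.uop_inl_inl_some' γ hcU
            have hc₀D : c₀ = D := G.cancel_left hb' hV₂
            subst hc₀D
            obtain ⟨w, _, hdw⟩ := G.assoc₁ hdu ha12
            have hfin : G.oplus (γ c₀) w = some a := by rw [hD]; exact hdw
            exact ⟨Sum.inr w, by rw [hop]; exact G.uop_inr_inl_of γ hfin⟩
    · -- clause 2
      intro bU y s hiy hby
      rw [hop] at hiy hby
      cases y with
      | inl y₁ => exact (G.uop_inl_inl_ne γ hiy).elim
      | inr y₀ =>
        have hd' : G.oplus a i = some y₀ := G.uop_inl_inr_some' γ hiy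
        cases bU with
        | inr b =>
          rw [G.uop_inr_inr γ] at hby
          exact absurd hby (by simp)
        | inl b =>
          obtain ⟨e, he, rfl⟩ := G.uop_inl_inr_some γ hby
          -- he : e ⊕ b = y₀
          have hsim : G.simI I a y₀ :=
            ⟨G.zero, G.idl_zero_mem hI.1.1, i, hi, a, G.oplus_zero a, hd'⟩
          obtain ⟨a₁, a₂, hsim1, hsim2, ha12⟩ := G.simI_split hI he hsim
          obtain ⟨u, huI, v, hvI, d, hdu, hdv⟩ := hsim2
          refine ⟨Sum.inl v, ⟨v, hvI, rfl⟩,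
            (G.uleU_ll γ U hop).mpr (G.le_of_suffix hdv), ?_⟩
          intro z hz
          rw [hop] at hz
          cases z with
          | inr z₀ => exact (G.uop_inr_inl_ne γ hz).elim
          | inl z₀ =>
            have hb' : G.oplus z₀ v = some b := G.uop_inl_inl_some' γ hz
            have hz₀d : z₀ = d := G.cancel_right hb' hdv
            subst hz₀d
            have hda' : G.le z₀ a :=
              G.le_trans' (G.le_of_prefix hdu) (G.le_of_suffix ha12)
            obtain ⟨w, hw⟩ := G.le_flip hda'
            exact ⟨Sum.inr w, by rw [hop]; exact G.uop_inl_inr_of γ hw⟩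

end GPEA

end Stmt17Aux8

theorem stmt17 {P : Type*} (G : GPEA P) (γ : P → P) (hγ : G.IsUnitizing γ)
    (I : Set P) (hI : G.IsNormalRieszIdeal I) (hγI : ∀ a : P, a ∈ I ↔ γ a ∈ I)
    (U : PEA (P ⊕ P)) (hop : U.toGPEA.oplus = uop G γ)
    (hz : U.toGPEA.zero = Sum.inl G.zero) (ho : U.one = Sum.inr G.zero) :
    U.toGPEA.IsNormalRieszIdeal (Sum.inl '' I) ↔ G.GCR I := by
  constructor
  · -- from Riesz structure in U to (GCR)
    intro hJ
    intro a b hab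
    obtain ⟨i, hi, j, hj, d, hdi, hdj⟩ := hab
    have hiU : (Sum.inl i : P ⊕ P) ∈ Sum.inl '' I := ⟨i, hi, rfl⟩
    -- i ≤ a in P
    obtain ⟨e, he⟩ := G.conjR' hdi
    have hleU : U.toGPEA.le (Sum.inl i) (Sum.inl a) := (G.uleU_ll γ U hop).mpr ⟨e, he⟩
    -- e' with e'⊕d = b
    obtain ⟨e', he'⟩ := G.conjL' hdj
    have hx : U.toGPEA.oplus (Sum.inl d) (Sum.inl i) = some (Sum.inl a) := by
      rw [hop]; exact G.uop_inl_inl_of γ hdi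
    have hxb : U.toGPEA.oplus (Sum.inl d) (Sum.inr b) = some (Sum.inr e') := by
      rw [hop]; exact G.uop_inl_inr_of γ he'
    obtain ⟨jU, hjU, hjUle, hprop⟩ :=
      (hJ.2.2 (Sum.inl i) hiU (Sum.inl a) hleU).1 (Sum.inr b) (Sum.inl d) (Sum.inr e') hx hxb
    obtain ⟨j₁, hj₁, rfl⟩ := hjU
    obtain ⟨s₀, hs₀⟩ := (G.uleU_lr γ U hop).mp hjUle
    have hc : U.toGPEA.oplus (Sum.inl j₁) (Sum.inr s₀) = some (Sum.inr b) := by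
      rw [hop]; exact G.uop_inl_inr_of γ hs₀
    obtain ⟨t, ht⟩ := hprop (Sum.inr s₀) hc
    rw [hop] at ht
    obtain ⟨f, hf, rfl⟩ := G.uop_inl_inr_some γ ht
    -- hf : f ⊕ a = s₀, hs₀ : b ⊕ j₁ = s₀
    obtain ⟨v, hv⟩ := G.conjR' hf
    obtain ⟨m, hm, hdm⟩ := G.assoc₁ hdi hv
    obtain ⟨m', hm', hdm'⟩ := G.assoc₁ hdj hs₀
    have hmm : m = m' := G.cancel_left hdm hdm'
    subst hmm
    have hmI : m ∈ I := G.idl_sum_mem hI.1.1 hj hj₁ hm'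
    have hvI : v ∈ I := G.idl_mem_of_le hI.1.1 hmI (G.le_of_suffix hm)
    have hfI : f ∈ I := (G.nrm hI hf hv).mpr hvI
    obtain ⟨g, hg⟩ := G.conjL' hs₀
    have hgI : g ∈ I := (G.nrm hI hg hs₀).mpr hj₁
    exact ⟨f, hfI, g, hgI, s₀, hf, hg⟩
  · -- from (GCR) to the Riesz structure in U
    intro hG
    refine ⟨⟨G.unitization_ideal γ U hop hI, G.unitization_normal γ U hop hI hγI⟩,
      G.unitization_R1 γ U hop hγ hγI hI hG, G.unitization_R2 γ U hop hγ hγI hI hG⟩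
end

section
/- If P is an upward directed GPEA with unitizing automorphism γ and U is its γ-unitization, then every normal Riesz γ-ideal I in P is also a normal Riesz ideal in U. -/
open scoped Classical

section St18Uop
variable {P : Type*} {G : GPEA P} {γ : P → P}

lemma st18_uop_ll (a b : P) : uop G γ (Sum.inl a) (Sum.inl b) = (G.oplus a b).map Sum.inl := rfl

lemma st18_uop_rr (a b : P) : uop G γ (Sum.inr a) (Sum.inr b) = none := rfl

lemma st18_uop_lr_intro {d a b : P} (hd : G.oplus d a = some b) :
    uop G γ (Sum.inl a) (Sum.inr b) = some (Sum.inr d) := by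
  have hh : G.leL a b := ⟨d, hd⟩
  have he : Classical.choose hh = d := G.cancel_right (Classical.choose_spec hh) hd
  simp only [uop, dif_pos hh, he]

lemma st18_uop_lr_elim {a b : P} {u : P ⊕ P} (h : uop G γ (Sum.inl a) (Sum.inr b) = some u) :
    ∃ d, G.oplus d a = some b ∧ u = Sum.inr d := by
  by_cases hh : G.leL a b
  · simp only [uop, dif_pos hh] at h
    exact ⟨Classical.choose hh, Classical.choose_spec hh, (Option.some.inj h).symm⟩
  · simp only [uop, dif_neg hh] at h
    exact nomatch h

lemma st18_uop_rl_intro {a b c : P} (hc : G.oplus (γ b) c = some a) :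
    uop G γ (Sum.inr a) (Sum.inl b) = some (Sum.inr c) := by
  have hh : G.le (γ b) a := ⟨c, hc⟩
  have he : Classical.choose hh = c := G.cancel_left (Classical.choose_spec hh) hc
  simp only [uop, dif_pos hh, he]

lemma st18_uop_rl_elim {a b : P} {u : P ⊕ P} (h : uop G γ (Sum.inr a) (Sum.inl b) = some u) :
    ∃ c, G.oplus (γ b) c = some a ∧ u = Sum.inr c := by
  by_cases hh : G.le (γ b) a
  · simp only [uop, dif_pos hh] at h
    exact ⟨Classical.choose hh, Classical.choose_spec hh, (Option.some.inj h).symm⟩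
  · simp only [uop, dif_neg hh] at h
    exact nomatch h
end St18Uop

section St18Ule

variable {P : Type*} {G : GPEA P} {γ : P → P}

private lemma st18_ule_ll {x y : P} :
    (∃ c, uop G γ (Sum.inl x) c = some (Sum.inl y)) ↔ G.le x y := by
  constructor
  · rintro ⟨c, hc⟩
    rcases c with c₀ | c₀
    · rw [st18_uop_ll] at hc
      obtain ⟨w, hw, hwe⟩ := Option.map_eq_some_iff.mp hc
      rw [Sum.inl.inj hwe] at hw
      exact ⟨c₀, hw⟩
    · obtain ⟨d, _, he⟩ := st18_uop_lr_elim hc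
      exact nomatch he
  · rintro ⟨c, hc⟩
    exact ⟨Sum.inl c, by rw [st18_uop_ll, hc]; rfl⟩

private lemma st18_ule_lr {x y : P} :
    (∃ c, uop G γ (Sum.inl x) c = some (Sum.inr y)) ↔ ∃ w, G.oplus y x = some w := by
  constructor
  · rintro ⟨c, hc⟩
    rcases c with c₀ | c₀
    · rw [st18_uop_ll] at hc
      obtain ⟨w, _, hwe⟩ := Option.map_eq_some_iff.mp hc
      exact nomatch hwe
    · obtain ⟨d, hd, he⟩ := st18_uop_lr_elim hc
      rw [← Sum.inr.inj he] at hd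
      exact ⟨c₀, hd⟩
  · rintro ⟨w, hw⟩
    exact ⟨Sum.inr w, st18_uop_lr_intro hw⟩

end St18Ule

section St18Aux

variable {P : Type*} {G : GPEA P} {I : Set P} {γ : P → P}

private lemma st18_leL_le {d a b : P} (h : G.oplus d a = some b) : G.le a b := (G.conj h).2

private lemma st18_le_leL {a b : P} (h : G.le a b) : ∃ d, G.oplus d a = some b := by
  obtain ⟨c, hc⟩ := h; exact (G.conj hc).1

private lemma st18_le_trans {a b c : P} (h1 : G.le a b) (h2 : G.le b c) : G.le a c := by
  obtain ⟨x, hx⟩ := h1; obtain ⟨y, hy⟩ := h2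
  obtain ⟨z, _, hz2⟩ := G.assoc₁ hx hy
  exact ⟨z, hz2⟩

/-- Normality hypothesis abbreviation. -/
private def st18N (G : GPEA P) (I : Set P) : Prop :=
  ∀ a b c s : P, G.oplus a c = some s → G.oplus c b = some s → (a ∈ I ↔ b ∈ I)

/-- Move an ideal element from the left of a sum to the right. -/
private lemma st18_Nf (hN : st18N G I) {i c w : P} (hi : i ∈ I)
    (h : G.oplus i c = some w) : ∃ d ∈ I, G.oplus c d = some w := by
  obtain ⟨d, hd⟩ := (G.conj h).2
  exact ⟨d, (hN i d c w h hd).mp hi, hd⟩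

/-- Move an ideal element from the right of a sum to the left. -/
private lemma st18_Nb (hN : st18N G I) {i c w : P} (hi : i ∈ I)
    (h : G.oplus c i = some w) : ∃ d ∈ I, G.oplus d c = some w := by
  obtain ⟨d, hd⟩ := (G.conj h).1
  exact ⟨d, (hN d i c w hd h).mpr hi, hd⟩

/-- Key lemma for R1, case a = inl, b = inr. -/
private lemma st18_lemA (hR1 : G.R1 I) (hdir : ∀ a b : P, ∃ c, G.le a c ∧ G.le b c)
    {i s a b u : P} (hi : i ∈ I) (hsi : G.oplus s i = some u) (hsa : G.oplus s a = some b) :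
    ∃ j ∈ I, ∃ k ∈ I, G.le j a ∧ (∃ w, G.oplus b k = some w) ∧
      ∃ t, G.oplus j k = some t ∧ G.le i t := by
  obtain ⟨T, hTu, hTb⟩ := hdir u b
  obtain ⟨f₁, hf₁⟩ := hTu
  obtain ⟨f₂, hf₂⟩ := hTb
  obtain ⟨g, hif₁, hsg⟩ := G.assoc₁ hsi hf₁
  obtain ⟨h, haf₂, hsh⟩ := G.assoc₁ hsa hf₂
  have hgh : g = h := G.cancel_left hsg hsh
  have hig : G.le i g := ⟨f₁, hif₁⟩
  obtain ⟨j, hjI, k, hkI, hja, hkf₂, t, hjk, hit⟩ :=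
    hR1 i hi a f₂ g (by rw [hgh]; exact haf₂) hig
  obtain ⟨f₃, hf₃⟩ := hkf₂
  obtain ⟨w, hbk, _⟩ := G.assoc₂ hf₃ hf₂
  exact ⟨j, hjI, k, hkI, hja, ⟨w, hbk⟩, t, hjk, hit⟩

/-- Key lemma for R2 clause 1, case x = inl, b = inr (uses directedness). -/
private lemma st18_lemC (hN : st18N G I) (hR1 : G.R1 I)
    (hdir : ∀ a b : P, ∃ c, G.le a c ∧ G.le b c)
    {i x a s b : P} (hi : i ∈ I) (hxi : G.oplus x i = some a) (hsx : G.oplus s x = some b) :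
    ∃ j ∈ I, ∃ W, G.oplus b j = some W ∧ ∃ f, G.oplus f a = some W := by
  obtain ⟨d, hd⟩ := (G.conj hxi).1
  have hdI : d ∈ I := (hN d i x a hd hxi).mpr hi
  obtain ⟨T, haT, hbT⟩ := hdir a b
  obtain ⟨e₁, he₁⟩ := st18_le_leL haT
  obtain ⟨e₂, he₂⟩ := st18_le_leL hbT
  obtain ⟨E, hE, hET⟩ := G.assoc₂ hd he₁
  obtain ⟨E₂, hE₂, hET₂⟩ := G.assoc₂ hsx he₂
  have hEE : E = E₂ := G.cancel_right hET hET₂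
  rw [← hEE] at hE₂
  have hdE : G.le d E := (G.conj hE).2
  obtain ⟨p, hpI, q, hqI, hpe₂, hqs, t, hpq, hdt⟩ := hR1 d hdI e₂ s E hE₂ hdE
  obtain ⟨e₅, he₅⟩ := st18_le_leL hpe₂
  obtain ⟨Pv, hpS, he₅P⟩ := G.assoc₁ he₅ hE₂
  obtain ⟨s₁, hs₁⟩ := hqs
  obtain ⟨t', ht', htP⟩ := G.assoc₂ hs₁ hpS
  have htt : t = t' := Option.some.inj (hpq.symm.trans ht')
  have hdP : G.le d Pv := st18_le_trans hdt ⟨s₁, by rw [htt]; exact htP⟩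
  obtain ⟨f, hf⟩ := st18_le_leL hdP
  obtain ⟨W, hPW, _⟩ := G.assoc₁ he₅P hET
  obtain ⟨b', hb', hpb⟩ := G.assoc₁ hpS hPW
  have hbb : b' = b := Option.some.inj (hb'.symm.trans hsx)
  rw [hbb] at hpb
  obtain ⟨j, hjI, hbj⟩ := st18_Nf hN hpI hpb
  obtain ⟨a₂, ha₂, hfa⟩ := G.assoc₁ hf hPW
  have haa : a₂ = a := Option.some.inj (ha₂.symm.trans hd)
  rw [haa] at hfa
  exact ⟨j, hjI, W, hbj, f, hfa⟩

/-- Mirror of `st18_lemC`. -/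
private lemma st18_lemC' (hN : st18N G I) (hR1 : G.R1 I)
    (hdir : ∀ a b : P, ∃ c, G.le a c ∧ G.le b c)
    {i x a s b : P} (hi : i ∈ I) (hix : G.oplus i x = some a) (hxs : G.oplus x s = some b) :
    ∃ j ∈ I, ∃ W, G.oplus j b = some W ∧ ∃ f, G.oplus a f = some W := by
  obtain ⟨d, hd⟩ := (G.conj hix).2
  have hdI : d ∈ I := (hN i d x a hix hd).mp hi
  obtain ⟨T, haT, hbT⟩ := hdir a b
  obtain ⟨e₁, he₁⟩ := haT
  obtain ⟨e₂, he₂⟩ := hbT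
  obtain ⟨E, hE, hET⟩ := G.assoc₁ hd he₁
  obtain ⟨E₂, hE₂, hET₂⟩ := G.assoc₁ hxs he₂
  have hEE : E = E₂ := G.cancel_left hET hET₂
  rw [← hEE] at hE₂
  have hdE : G.le d E := ⟨e₁, hE⟩
  obtain ⟨p, hpI, q, hqI, hps, hqe₂, t, hpq, hdt⟩ := hR1 d hdI s e₂ E hE₂ hdE
  obtain ⟨e₅, he₅⟩ := hqe₂
  obtain ⟨Pv, hsq, hPe₅⟩ := G.assoc₂ he₅ hE₂
  obtain ⟨s₁, hs₁⟩ := st18_le_leL hps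
  obtain ⟨t', ht', htP⟩ := G.assoc₁ hs₁ hsq
  have htt : t = t' := Option.some.inj (hpq.symm.trans ht')
  have hdP : G.le d Pv := st18_le_trans hdt (st18_leL_le (by rw [htt]; exact htP))
  obtain ⟨f, hf⟩ := hdP
  obtain ⟨W, hxP, _⟩ := G.assoc₂ hPe₅ hET
  obtain ⟨b', hb', hbq⟩ := G.assoc₂ hsq hxP
  have hbb : b' = b := Option.some.inj (hb'.symm.trans hxs)
  rw [hbb] at hbq
  obtain ⟨j, hjI, hjb⟩ := st18_Nb hN hqI hbq
  obtain ⟨a₂, ha₂, haf⟩ := G.assoc₂ hf hxP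
  have haa : a₂ = a := Option.some.inj (ha₂.symm.trans hd)
  rw [haa] at haf
  exact ⟨j, hjI, W, hjb, f, haf⟩

/-- Key lemma for R2 clause 1, case x = inr ("split below ideal ⊕ element"). -/
private lemma st18_lemE₁ (hN : st18N G I) (hR1 : G.R1 I)
    {ii A X B S : P} (hiI : ii ∈ I) (h1 : G.oplus ii A = some X) (h2 : G.oplus B S = some X) :
    ∃ J ∈ I, ∃ C, G.oplus J C = some B ∧ G.le C A := by
  obtain ⟨i3, hi3I, h3⟩ := st18_Nf hN hiI h1
  have hi3X : G.le i3 X := (G.conj h3).2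
  obtain ⟨p, hpI, q, hqI, hpB, hqS, t, hpq, hi3t⟩ := hR1 i3 hi3I B S X h2 hi3X
  obtain ⟨C', hC'⟩ := st18_le_leL hpB
  obtain ⟨s₂, hs₂⟩ := hqS
  obtain ⟨m₀, hpm, hCm⟩ := G.assoc₁ hC' h2
  obtain ⟨t', ht', hts⟩ := G.assoc₂ hs₂ hpm
  have htt : t = t' := Option.some.inj (hpq.symm.trans ht')
  have hi3m : G.le i3 m₀ := st18_le_trans hi3t ⟨s₂, by rw [htt]; exact hts⟩
  obtain ⟨m₂, hm₂⟩ := st18_le_leL hi3m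
  obtain ⟨Z, hZ, hZX⟩ := G.assoc₂ hm₂ hCm
  have hZA : Z = A := G.cancel_right hZX h3
  rw [hZA] at hZ
  obtain ⟨J, hJI, hJ⟩ := st18_Nb hN hpI hC'
  exact ⟨J, hJI, C', hJ, ⟨m₂, hZ⟩⟩

/-- Mirror of `st18_lemE₁`. -/
private lemma st18_lemE₂ (hN : st18N G I) (hR1 : G.R1 I)
    {i A Y S B : P} (hiI : i ∈ I) (h1 : G.oplus A i = some Y) (h2 : G.oplus S B = some Y) :
    ∃ k ∈ I, ∃ C, G.oplus C k = some B ∧ G.le C A := by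
  obtain ⟨i3, hi3I, h3⟩ := st18_Nb hN hiI h1
  have hi3Y : G.le i3 Y := ⟨A, h3⟩
  obtain ⟨p, hpI, q, hqI, hpS, hqB, t, hpq, hi3t⟩ := hR1 i3 hi3I S B Y h2 hi3Y
  obtain ⟨C', hC'⟩ := hqB
  obtain ⟨s₂, hs₂⟩ := st18_le_leL hpS
  obtain ⟨m₀, hSq, hmC⟩ := G.assoc₂ hC' h2
  obtain ⟨t', ht', hts⟩ := G.assoc₁ hs₂ hSq
  have htt : t = t' := Option.some.inj (hpq.symm.trans ht')
  have hi3m : G.le i3 m₀ := st18_le_trans hi3t (st18_leL_le (by rw [htt]; exact hts))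
  obtain ⟨m₂, hm₂⟩ := hi3m
  obtain ⟨Z, hZ, hZY⟩ := G.assoc₁ hm₂ hmC
  have hZA : Z = A := G.cancel_left hZY h3
  rw [hZA] at hZ
  obtain ⟨k, hkI, hk⟩ := st18_Nf hN hqI hC'
  exact ⟨k, hkI, C', hk, st18_leL_le hZ⟩

end St18Aux

section St18AuxB

variable {P : Type*} {G : GPEA P} {I : Set P} {γ : P → P}

private lemma st18_pre (hγ3 : ∀ a b : P,
      (∃ s, G.oplus (γ a) (γ b) = some s) → ∃ t, G.oplus a b = some t)
    (hγmor : G.IsMorphism G γ) (X Y S : P) (h : G.oplus (γ X) (γ Y) = some S) :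
    ∃ T, G.oplus X Y = some T ∧ γ T = S := by
  obtain ⟨T, hT⟩ := hγ3 X Y ⟨S, h⟩
  exact ⟨T, hT, Option.some.inj ((hγmor X Y T hT).symm.trans h)⟩

/-- Key lemma for R1, case a = inr, b = inl. -/
private lemma st18_lemB (hR1 : G.R1 I) (hdir : ∀ a b : P, ∃ c, G.le a c ∧ G.le b c)
    (hγinj : Function.Injective γ) (hγsurj : Function.Surjective γ)
    (hγmor : G.IsMorphism G γ)
    (hγ3 : ∀ a b : P, (∃ s, G.oplus (γ a) (γ b) = some s) → ∃ t, G.oplus a b = some t)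
    (hγ4 : ∀ a b : P, (∃ s, G.oplus (γ a) b = some s) ↔ ∃ t, G.oplus b a = some t)
    (hγI : ∀ a : P, a ∈ I ↔ γ a ∈ I)
    {i s u b a : P} (hi : i ∈ I) (hsi : G.oplus s i = some u)
    (hba : G.oplus (γ b) s = some a) :
    ∃ j ∈ I, ∃ k ∈ I, (∃ w, G.oplus a j = some w) ∧ G.le k b ∧
      ∃ t, G.oplus j k = some t ∧ G.le i t := by
  obtain ⟨v, hv⟩ := (hγ4 i s).mpr ⟨u, hsi⟩
  have hviI : γ i ∈ I := (hγI i).mp hi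
  obtain ⟨T, hvT, haT⟩ := hdir v a
  obtain ⟨e₁, he₁⟩ := st18_le_leL hvT
  obtain ⟨e₂, he₂⟩ := st18_le_leL haT
  obtain ⟨E, hE, hET⟩ := G.assoc₂ hv he₁
  obtain ⟨E₂, hE₂, hET₂⟩ := G.assoc₂ hba he₂
  have hEE : E = E₂ := G.cancel_right hET hET₂
  rw [← hEE] at hE₂
  have hgiE : G.le (γ i) E := (G.conj hE).2
  obtain ⟨p, hpI, q, hqI, hpe₂, hqγb, t, hpq, hgit⟩ := hR1 (γ i) hviI e₂ (γ b) E hE₂ hgiE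
  obtain ⟨e₅, he₅⟩ := st18_le_leL hpe₂
  obtain ⟨pB, hpγb, he₅pB⟩ := G.assoc₁ he₅ hE₂
  obtain ⟨W, hpBs, _⟩ := G.assoc₁ he₅pB hET
  obtain ⟨a', ha', hpa⟩ := G.assoc₁ hpγb hpBs
  have haa : a' = a := Option.some.inj (ha'.symm.trans hba)
  rw [haa] at hpa
  obtain ⟨j, hjγ⟩ := hγsurj p
  have hjI : j ∈ I := (hγI j).mpr (by rw [hjγ]; exact hpI)
  obtain ⟨k, hkγ⟩ := hγsurj q
  have hkI : k ∈ I := (hγI k).mpr (by rw [hkγ]; exact hqI)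
  have haj : ∃ w, G.oplus a j = some w := (hγ4 j a).mp ⟨W, by rw [hjγ]; exact hpa⟩
  obtain ⟨r, hr⟩ := hqγb
  obtain ⟨r₀, hr₀⟩ := hγsurj r
  obtain ⟨T₀, hT₀, hT₀b⟩ := st18_pre hγ3 hγmor k r₀ (γ b) (by rw [hkγ, hr₀]; exact hr)
  have hkb : G.le k b := ⟨r₀, by rw [hγinj hT₀b] at hT₀; exact hT₀⟩
  obtain ⟨t₀, ht₀, ht₀t⟩ := st18_pre hγ3 hγmor j k t (by rw [hjγ, hkγ]; exact hpq)
  obtain ⟨w₁, hw₁⟩ := hgit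
  obtain ⟨w₀, hw₀⟩ := hγsurj w₁
  obtain ⟨t₁, ht₁, ht₁t⟩ := st18_pre hγ3 hγmor i w₀ t (by rw [hw₀]; exact hw₁)
  have htt : t₁ = t₀ := hγinj (ht₁t.trans ht₀t.symm)
  refine ⟨j, hjI, k, hkI, haj, hkb, t₀, ht₀, ⟨w₀, ?_⟩⟩
  rw [← htt]; exact ht₁

end St18AuxB

theorem stmt18 {P : Type*} (G : GPEA P) (γ : P → P) (hγ : G.IsUnitizing γ)
    (hdir : ∀ a b : P, ∃ c, G.le a c ∧ G.le b c)
    (I : Set P) (hI : G.IsNormalRieszIdeal I) (hγI : ∀ a : P, a ∈ I ↔ γ a ∈ I)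
    (U : PEA (P ⊕ P)) (hop : U.toGPEA.oplus = uop G γ)
    (hz : U.toGPEA.zero = Sum.inl G.zero) (ho : U.one = Sum.inr G.zero) :
    U.toGPEA.IsNormalRieszIdeal (Sum.inl '' I) := by
  obtain ⟨hγbij, hγmor, hγ3, hγ4⟩ := hγ
  have hγinj := hγbij.1
  have hγsurj := hγbij.2
  obtain ⟨⟨⟨hIne, hIdown, hIclose⟩, hN⟩, hR1, hR2⟩ := hI
  have hN' : st18N G I := hN
  have h0I : G.zero ∈ I := by
    obtain ⟨x, hx⟩ := hIne
    exact hIdown x hx _ ⟨x, G.zero_oplus x⟩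
  have hUle : ∀ u v : P ⊕ P, U.toGPEA.le u v ↔ ∃ c, uop G γ u c = some v := by
    intro u v; unfold GPEA.le; rw [hop]
  have hmeml : ∀ z : P, ((Sum.inl z : P ⊕ P) ∈ Sum.inl '' I) ↔ z ∈ I := by
    intro z
    constructor
    · rintro ⟨w, hw, hwe⟩; rwa [← Sum.inl.inj hwe]
    · exact fun h => ⟨z, h, rfl⟩
  have hmemr : ∀ z : P, (Sum.inr z : P ⊕ P) ∉ Sum.inl '' I := by
    rintro z ⟨w, _, hwe⟩; exact nomatch hwe
  refine ⟨⟨⟨⟨Sum.inl G.zero, ⟨G.zero, h0I, rfl⟩⟩, ?_, ?_⟩, ?_⟩, ?_, ?_⟩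
  · -- downward closed
    rintro s ⟨s₀, hs₀, rfl⟩ b hb
    rw [hUle] at hb
    obtain ⟨c, hc⟩ := hb
    rcases b with b₀ | b₀
    · rcases c with c₀ | c₀
      · rw [st18_uop_ll] at hc
        obtain ⟨w, hw, hwe⟩ := Option.map_eq_some_iff.mp hc
        rw [Sum.inl.inj hwe] at hw
        exact ⟨b₀, hIdown s₀ hs₀ b₀ ⟨c₀, hw⟩, rfl⟩
      · obtain ⟨d, _, he⟩ := st18_uop_lr_elim hc
        exact nomatch he
    · rcases c with c₀ | c₀
      · obtain ⟨d, _, he⟩ := st18_uop_rl_elim hc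
        exact nomatch he
      · rw [st18_uop_rr] at hc
        exact nomatch hc
  · -- closed under orthosums
    rintro x ⟨a₀, ha₀, rfl⟩ y ⟨b₀, hb₀, rfl⟩ s hs
    rw [hop, st18_uop_ll] at hs
    obtain ⟨w, hw, hwe⟩ := Option.map_eq_some_iff.mp hs
    exact ⟨w, hIclose a₀ ha₀ b₀ hb₀ w hw, hwe⟩
  · -- normality
    intro a b c s h1 h2
    rw [hop] at h1 h2
    rcases a with a₀ | a₀ <;> rcases c with c₀ | c₀
    · -- a inl, c inl
      rw [st18_uop_ll] at h1
      obtain ⟨s₀, hs₀, hse⟩ := Option.map_eq_some_iff.mp h1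
      subst hse
      rcases b with b₀ | b₀
      · rw [st18_uop_ll] at h2
        obtain ⟨w, hw, hwe⟩ := Option.map_eq_some_iff.mp h2
        rw [Sum.inl.inj hwe] at hw
        rw [hmeml, hmeml]
        exact hN a₀ b₀ c₀ s₀ hs₀ hw
      · obtain ⟨d, _, he⟩ := st18_uop_lr_elim h2
        exact nomatch he
    · -- a inl, c inr
      obtain ⟨s₁, hs₁, hse⟩ := st18_uop_lr_elim h1
      subst hse
      rcases b with b₀ | b₀
      · obtain ⟨e, heq, hee⟩ := st18_uop_rl_elim h2
        rw [← Sum.inr.inj hee] at heq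
        rw [hmeml, hmeml]
        have h3 := hN (γ b₀) a₀ s₁ c₀ heq hs₁
        exact ⟨fun h => (hγI b₀).mpr (h3.mpr h), fun h => h3.mp ((hγI b₀).mp h)⟩
      · rw [st18_uop_rr] at h2
        exact nomatch h2
    · -- a inr, c inl
      obtain ⟨e, he, hse⟩ := st18_uop_rl_elim h1
      subst hse
      rcases b with b₀ | b₀
      · rw [st18_uop_ll] at h2
        obtain ⟨w, _, hwe⟩ := Option.map_eq_some_iff.mp h2
        exact nomatch hwe
      · exact iff_of_false (hmemr a₀) (hmemr b₀)
    · -- a inr, c inr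
      rw [st18_uop_rr] at h1
      exact nomatch h1
  · -- R1
    rintro i ⟨i', hi', rfl⟩ a b s hab hile
    rw [hop] at hab
    rw [hUle] at hile
    rcases a with a' | a' <;> rcases b with b' | b'
    · rw [st18_uop_ll] at hab
      obtain ⟨s₁, hs₁, hse⟩ := Option.map_eq_some_iff.mp hab
      rw [← hse] at hile
      obtain ⟨j, hjI, k, hkI, hja, hkb, t, hjk, hit⟩ :=
        hR1 i' hi' a' b' s₁ hs₁ (st18_ule_ll.mp hile)
      refine ⟨Sum.inl j, ⟨j, hjI, rfl⟩, Sum.inl k, ⟨k, hkI, rfl⟩, ?_, ?_, Sum.inl t, ?_, ?_⟩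
      · rw [hUle]; exact st18_ule_ll.mpr hja
      · rw [hUle]; exact st18_ule_ll.mpr hkb
      · rw [hop, st18_uop_ll, hjk]; rfl
      · rw [hUle]; exact st18_ule_ll.mpr hit
    · obtain ⟨s₁, hs₁, hse⟩ := st18_uop_lr_elim hab
      rw [hse] at hile
      obtain ⟨u, hu⟩ := st18_ule_lr.mp hile
      obtain ⟨j, hjI, k, hkI, hja, hbk, t, hjk, hit⟩ := st18_lemA hR1 hdir hi' hu hs₁
      refine ⟨Sum.inl j, ⟨j, hjI, rfl⟩, Sum.inl k, ⟨k, hkI, rfl⟩, ?_, ?_, Sum.inl t, ?_, ?_⟩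
      · rw [hUle]; exact st18_ule_ll.mpr hja
      · rw [hUle]; exact st18_ule_lr.mpr hbk
      · rw [hop, st18_uop_ll, hjk]; rfl
      · rw [hUle]; exact st18_ule_ll.mpr hit
    · obtain ⟨s₁, hs₁, hse⟩ := st18_uop_rl_elim hab
      rw [hse] at hile
      obtain ⟨u, hu⟩ := st18_ule_lr.mp hile
      obtain ⟨j, hjI, k, hkI, haj, hkb, t, hjk, hit⟩ :=
        st18_lemB hR1 hdir hγinj hγsurj hγmor hγ3 hγ4 hγI hi' hu hs₁
      refine ⟨Sum.inl j, ⟨j, hjI, rfl⟩, Sum.inl k, ⟨k, hkI, rfl⟩, ?_, ?_, Sum.inl t, ?_, ?_⟩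
      · rw [hUle]; exact st18_ule_lr.mpr haj
      · rw [hUle]; exact st18_ule_ll.mpr hkb
      · rw [hop, st18_uop_ll, hjk]; rfl
      · rw [hUle]; exact st18_ule_ll.mpr hit
    · rw [st18_uop_rr] at hab
      exact nomatch hab
  · -- R2
    rintro i ⟨i', hi', rfl⟩ a hia
    constructor
    · -- clause 1
      intro b x s hxi hxb
      rw [hop] at hxi hxb
      rcases x with x' | x₀
      · rw [st18_uop_ll] at hxi
        obtain ⟨a₁, ha₁, hae⟩ := Option.map_eq_some_iff.mp hxi
        rcases b with b₁ | b₁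
        · rw [st18_uop_ll] at hxb
          obtain ⟨s₁, hs₁, _⟩ := Option.map_eq_some_iff.mp hxb
          obtain ⟨j, hjI, hjb, hcons⟩ := (hR2 i' hi' a₁ (G.conj ha₁).2).1 b₁ x' s₁ ha₁ hs₁
          refine ⟨Sum.inl j, ⟨j, hjI, rfl⟩, ?_, ?_⟩
          · rw [hUle]; exact st18_ule_ll.mpr hjb
          · intro c hc
            rw [hop] at hc
            rcases c with c₀ | c₀
            · rw [st18_uop_ll] at hc
              obtain ⟨w, hw, hwe⟩ := Option.map_eq_some_iff.mp hc
              rw [Sum.inl.inj hwe] at hw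
              obtain ⟨t, ht⟩ := hcons c₀ hw
              exact ⟨Sum.inl t, by rw [hop, ← hae, st18_uop_ll, ht]; rfl⟩
            · obtain ⟨d, _, he⟩ := st18_uop_lr_elim hc
              exact nomatch he
        · obtain ⟨s₁, hs₁, _⟩ := st18_uop_lr_elim hxb
          obtain ⟨j, hjI, W, hbW, f, hfW⟩ := st18_lemC hN' hR1 hdir hi' ha₁ hs₁
          refine ⟨Sum.inl j, ⟨j, hjI, rfl⟩, ?_, ?_⟩
          · rw [hUle]; exact st18_ule_lr.mpr ⟨W, hbW⟩
          · intro c hc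
            rw [hop] at hc
            rcases c with c₀ | c₀
            · rw [st18_uop_ll] at hc
              obtain ⟨w, _, hwe⟩ := Option.map_eq_some_iff.mp hc
              exact nomatch hwe
            · obtain ⟨d, hd, he⟩ := st18_uop_lr_elim hc
              rw [← Sum.inr.inj he] at hd
              have hc₀ : c₀ = W := Option.some.inj (hd.symm.trans hbW)
              refine ⟨Sum.inr f, ?_⟩
              rw [hop, ← hae, hc₀]
              exact st18_uop_lr_intro hfW
      · obtain ⟨a₂, ha₂, hae⟩ := st18_uop_rl_elim hxi
        rcases b with b₁ | b₁
        · obtain ⟨s₁, hs₁, _⟩ := st18_uop_rl_elim hxb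
          obtain ⟨J, hJI, C, hJC, hCA⟩ := st18_lemE₁ hN' hR1 ((hγI i').mp hi') ha₂ hs₁
          obtain ⟨j₀, hj₀⟩ := hγsurj J
          obtain ⟨c₁, hc₁⟩ := hγsurj C
          obtain ⟨T, hT, hTb⟩ := st18_pre hγ3 hγmor j₀ c₁ (γ b₁) (by rw [hj₀, hc₁]; exact hJC)
          rw [hγinj hTb] at hT
          have hj₀I : j₀ ∈ I := (hγI j₀).mpr (by rw [hj₀]; exact hJI)
          refine ⟨Sum.inl j₀, ⟨j₀, hj₀I, rfl⟩, ?_, ?_⟩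
          · rw [hUle]; exact st18_ule_ll.mpr ⟨c₁, hT⟩
          · intro c hc
            rw [hop] at hc
            rcases c with c₂ | c₂
            · rw [st18_uop_ll] at hc
              obtain ⟨w, hw, hwe⟩ := Option.map_eq_some_iff.mp hc
              rw [Sum.inl.inj hwe] at hw
              have hcc : c₂ = c₁ := G.cancel_left hw hT
              obtain ⟨e, he⟩ := hCA
              refine ⟨Sum.inr e, ?_⟩
              rw [hop, hae, hcc]
              exact st18_uop_rl_intro (by rw [hc₁]; exact he)
            · obtain ⟨d, _, he⟩ := st18_uop_lr_elim hc
              exact nomatch he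
        · rw [st18_uop_rr] at hxb
          exact nomatch hxb
    · -- clause 2
      intro b y s hiy hby
      rw [hop] at hiy hby
      rcases y with y' | y₀
      · rw [st18_uop_ll] at hiy
        obtain ⟨a₁, ha₁, hae⟩ := Option.map_eq_some_iff.mp hiy
        rcases b with b₁ | b₁
        · rw [st18_uop_ll] at hby
          obtain ⟨s₁, hs₁, _⟩ := Option.map_eq_some_iff.mp hby
          obtain ⟨k, hkI, hkb, hcons⟩ := (hR2 i' hi' a₁ ⟨y', ha₁⟩).2 b₁ y' s₁ ha₁ hs₁
          refine ⟨Sum.inl k, ⟨k, hkI, rfl⟩, ?_, ?_⟩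
          · rw [hUle]; exact st18_ule_ll.mpr hkb
          · intro z hz
            rw [hop] at hz
            rcases z with z₀ | z₀
            · rw [st18_uop_ll] at hz
              obtain ⟨w, hw, hwe⟩ := Option.map_eq_some_iff.mp hz
              rw [Sum.inl.inj hwe] at hw
              obtain ⟨t, ht⟩ := hcons z₀ hw
              exact ⟨Sum.inl t, by rw [hop, ← hae, st18_uop_ll, ht]; rfl⟩
            · obtain ⟨e, _, he⟩ := st18_uop_rl_elim hz
              exact nomatch he
        · obtain ⟨s₁, hs₁, _⟩ := st18_uop_rl_elim hby
          obtain ⟨K, hKI, W, hKb, f, hfW⟩ :=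
            st18_lemC' hN' hR1 hdir ((hγI i').mp hi') (hγmor i' y' a₁ ha₁) hs₁
          obtain ⟨k₀, hk₀⟩ := hγsurj K
          have hk₀I : k₀ ∈ I := (hγI k₀).mpr (by rw [hk₀]; exact hKI)
          refine ⟨Sum.inl k₀, ⟨k₀, hk₀I, rfl⟩, ?_, ?_⟩
          · rw [hUle]
            exact st18_ule_lr.mpr ((hγ4 k₀ b₁).mp ⟨W, by rw [hk₀]; exact hKb⟩)
          · intro z hz
            rw [hop] at hz
            rcases z with z₀ | z₀
            · rw [st18_uop_ll] at hz
              obtain ⟨w, _, hwe⟩ := Option.map_eq_some_iff.mp hz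
              exact nomatch hwe
            · obtain ⟨e, he, hee⟩ := st18_uop_rl_elim hz
              rw [← Sum.inr.inj hee] at he
              have hz₀ : z₀ = W := by
                have hKz : G.oplus K b₁ = some z₀ := by rw [← hk₀]; exact he
                exact Option.some.inj (hKz.symm.trans hKb)
              refine ⟨Sum.inr f, ?_⟩
              rw [hop, ← hae, hz₀]
              exact st18_uop_rl_intro hfW
      · obtain ⟨a₂, ha₂, hae⟩ := st18_uop_lr_elim hiy
        rcases b with b₁ | b₁
        · obtain ⟨s₁, hs₁, _⟩ := st18_uop_lr_elim hby
          obtain ⟨k, hkI, C, hCk, hCA⟩ := st18_lemE₂ hN' hR1 hi' ha₂ hs₁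
          refine ⟨Sum.inl k, ⟨k, hkI, rfl⟩, ?_, ?_⟩
          · rw [hUle]; exact st18_ule_ll.mpr (st18_leL_le hCk)
          · intro z hz
            rw [hop] at hz
            rcases z with z₀ | z₀
            · rw [st18_uop_ll] at hz
              obtain ⟨w, hw, hwe⟩ := Option.map_eq_some_iff.mp hz
              rw [Sum.inl.inj hwe] at hw
              have hzC : z₀ = C := G.cancel_right hw hCk
              obtain ⟨d, hd⟩ := st18_le_leL hCA
              refine ⟨Sum.inr d, ?_⟩
              rw [hop, hae, hzC]
              exact st18_uop_lr_intro hd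
            · obtain ⟨e, _, he⟩ := st18_uop_rl_elim hz
              exact nomatch he
        · rw [st18_uop_rr] at hby
          exact nomatch hby
end

section
/- Let P be a GPEA with total orthosummation (a ⊕ b defined for all a, b) and unitizing automorphism γ, and let U be the γ-unitization of P. If P has the Riesz decomposition property RDP, then U has RDP. (RDP: a ⊕ b = c ⊕ d implies there exist e₁₁, e₁₂, e₂₁, e₂₂ with a = e₁₁ ⊕ e₁₂, b = e₂₁ ⊕ e₂₂, c = e₁₁ ⊕ e₂₁, d = e₁₂ ⊕ e₂₂.) -/
open scoped Classical

section UnitizationAux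

variable {P : Type*} (G : GPEA P) (htot : ∀ a b : P, ∃ s, G.oplus a b = some s)

/-- The total operation extracted from the partial one. -/
noncomputable def fop (a b : P) : P := (htot a b).choose

lemma fop_spec (a b : P) : G.oplus a b = some (fop G htot a b) :=
  (htot a b).choose_spec

lemma fop_uniq {a b s : P} (h : G.oplus a b = some s) : s = fop G htot a b :=
  Option.some.inj (h.symm.trans (fop_spec G htot a b))

lemma fop_assoc (a b c : P) :
    fop G htot (fop G htot a b) c = fop G htot a (fop G htot b c) := by
  obtain ⟨bc, h1, h2⟩ := G.assoc₁ (fop_spec G htot a b)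
    (fop_spec G htot (fop G htot a b) c)
  have hbc : bc = fop G htot b c := fop_uniq G htot h1
  subst hbc
  exact fop_uniq G htot h2

lemma fop_cancel_left {a b c : P} (h : fop G htot c a = fop G htot c b) : a = b := by
  refine G.cancel_left (fop_spec G htot c a) ?_
  rw [fop_spec G htot c b, h]

lemma fop_cancel_right {a b c : P} (h : fop G htot a c = fop G htot b c) : a = b := by
  refine G.cancel_right (fop_spec G htot a c) ?_
  rw [fop_spec G htot b c, h]

lemma fop_zero (a : P) : fop G htot a G.zero = a :=
  (fop_uniq G htot (G.oplus_zero a)).symm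

lemma zero_fop (a : P) : fop G htot G.zero a = a :=
  (fop_uniq G htot (G.zero_oplus a)).symm

variable {γ : P → P}

lemma gamma_fop (hγ : G.IsUnitizing γ) (a b : P) :
    γ (fop G htot a b) = fop G htot (γ a) (γ b) :=
  fop_uniq G htot (hγ.2.1 a b _ (fop_spec G htot a b))

/-- Left-common-factor refinement with commuting complements. -/
lemma commL (hRDP : G.RDP) (a c : P) :
    ∃ p q r, fop G htot p q = a ∧ fop G htot p r = c ∧
      fop G htot q r = fop G htot r q := by
  obtain ⟨d, hd⟩ := (G.conj (fop_spec G htot a c)).2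
  obtain ⟨e₁₁, e₁₂, e₂₁, e₂₂, h1, h2, h3, h4⟩ :=
    hRDP a c c d _ (fop_spec G htot a c) hd
  have ha : a = fop G htot e₁₁ e₁₂ := fop_uniq G htot h1
  have hc : c = fop G htot e₂₁ e₂₂ := fop_uniq G htot h2
  have hc' : c = fop G htot e₁₁ e₂₁ := fop_uniq G htot h3
  have hdd : d = fop G htot e₁₂ e₂₂ := fop_uniq G htot h4
  have ht : fop G htot a c = fop G htot c d := fop_uniq G htot hd
  refine ⟨e₁₁, e₁₂, e₂₁, ha.symm, hc'.symm, ?_⟩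
  rw [ha, hdd] at ht
  nth_rewrite 1 [hc] at ht
  rw [hc'] at ht
  rw [fop_assoc, fop_assoc] at ht
  have h5 := fop_cancel_left G htot ht
  rw [← fop_assoc, ← fop_assoc] at h5
  exact fop_cancel_right G htot h5

/-- Right-common-factor refinement with commuting complements. -/
lemma commR (hRDP : G.RDP) (b d : P) :
    ∃ u q m, fop G htot u m = b ∧ fop G htot q m = d ∧
      fop G htot u q = fop G htot q u := by
  obtain ⟨x, hx⟩ := (G.conj (fop_spec G htot d b)).1
  obtain ⟨e₁₁, e₁₂, e₂₁, e₂₂, h1, h2, h3, h4⟩ :=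
    hRDP x d d b _ hx (fop_spec G htot d b)
  have hxv : x = fop G htot e₁₁ e₁₂ := fop_uniq G htot h1
  have hd1 : d = fop G htot e₂₁ e₂₂ := fop_uniq G htot h2
  have hd2 : d = fop G htot e₁₁ e₂₁ := fop_uniq G htot h3
  have hb : b = fop G htot e₁₂ e₂₂ := fop_uniq G htot h4
  have ht : fop G htot d b = fop G htot x d := fop_uniq G htot hx
  refine ⟨e₁₂, e₂₁, e₂₂, hb.symm, hd1.symm, ?_⟩
  rw [hxv, hb] at ht
  nth_rewrite 1 [hd2] at ht
  rw [hd1, fop_assoc, fop_assoc] at ht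
  have h5 := fop_cancel_left G htot ht
  rw [← fop_assoc, ← fop_assoc] at h5
  exact (fop_cancel_right G htot h5).symm

lemma uop_inl_inl (a b : P) :
    uop G γ (.inl a) (.inl b) = some (.inl (fop G htot a b)) := by
  simp [uop, fop_spec G htot a b]

lemma uop_inl_inr (a b c : P) :
    uop G γ (.inl a) (.inr b) = some (.inr c) ↔ fop G htot c a = b := by
  simp only [uop]
  by_cases h : G.leL a b
  · rw [dif_pos h]
    have hs := Classical.choose_spec h
    constructor
    · rintro hh
      have hcc : Classical.choose h = c := by
        injection hh with hh'; injection hh' with hh''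
      subst hcc
      exact (fop_uniq G htot hs).symm
    · intro hh
      have hc : G.oplus c a = some b := by rw [fop_spec G htot c a, hh]
      rw [G.cancel_right hs hc]
  · rw [dif_neg h]
    constructor
    · intro hh; exact absurd hh (by simp)
    · intro hh
      exact absurd ⟨c, by rw [fop_spec G htot c a, hh]⟩ h

lemma uop_inr_inl (a b c : P) :
    uop G γ (.inr a) (.inl b) = some (.inr c) ↔ fop G htot (γ b) c = a := by
  simp only [uop]
  by_cases h : G.le (γ b) a
  · rw [dif_pos h]
    have hs := Classical.choose_spec h
    constructor
    · rintro hh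
      have hcc : Classical.choose h = c := by
        injection hh with hh'; injection hh' with hh''
      subst hcc
      exact (fop_uniq G htot hs).symm
    · intro hh
      have hc : G.oplus (γ b) c = some a := by rw [fop_spec G htot (γ b) c, hh]
      rw [G.cancel_left hs hc]
  · rw [dif_neg h]
    constructor
    · intro hh; exact absurd hh (by simp)
    · intro hh
      exact absurd ⟨c, by rw [fop_spec G htot (γ b) c, hh]⟩ h

lemma uop_inl_inr_ne_inl (a b : P) {z : P} :
    uop G γ (.inl a) (.inr b) ≠ some (.inl z) := by
  simp only [uop]; split <;> simp

lemma uop_inr_inl_ne_inl (a b : P) {z : P} :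
    uop G γ (.inr a) (.inl b) ≠ some (.inl z) := by
  simp only [uop]; split <;> simp

end UnitizationAux

theorem stmt19 {P : Type*} (G : GPEA P)
    (htot : ∀ a b : P, ∃ s, G.oplus a b = some s)
    (γ : P → P) (hγ : G.IsUnitizing γ)
    (U : PEA (P ⊕ P)) (hop : U.toGPEA.oplus = uop G γ)
    (hz : U.toGPEA.zero = Sum.inl G.zero) (ho : U.one = Sum.inr G.zero)
    (hRDP : G.RDP) : U.toGPEA.RDP := by
  intro a b c d s hab hcd
  rw [hop] at hab hcd
  simp only [hop]
  rcases s with s₀ | s₀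
  · -- the sum is in P : all four summands are in P
    rcases a with a₀ | a₀
    · rcases b with b₀ | b₀
      · rcases c with c₀ | c₀
        · rcases d with d₀ | d₀
          · -- all inl: use RDP of G
            rw [uop_inl_inl G htot] at hab hcd
            have hab' : fop G htot a₀ b₀ = s₀ := by
              injection hab with h; injection h with h'
            have hcd' : fop G htot c₀ d₀ = s₀ := by
              injection hcd with h; injection h with h'
            obtain ⟨e₁₁, e₁₂, e₂₁, e₂₂, h1, h2, h3, h4⟩ :=
              hRDP a₀ b₀ c₀ d₀ s₀ (by rw [fop_spec G htot a₀ b₀, hab'])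
                (by rw [fop_spec G htot c₀ d₀, hcd'])
            refine ⟨.inl e₁₁, .inl e₁₂, .inl e₂₁, .inl e₂₂, ?_, ?_, ?_, ?_⟩ <;>
              rw [uop_inl_inl G htot] <;>
              simp only [Option.some.injEq, Sum.inl.injEq]
            · exact (fop_uniq G htot h1).symm
            · exact (fop_uniq G htot h2).symm
            · exact (fop_uniq G htot h3).symm
            · exact (fop_uniq G htot h4).symm
          · exact absurd hcd (uop_inl_inr_ne_inl G (γ := γ) c₀ d₀)
        · rcases d with d₀ | d₀
          · exact absurd hcd (uop_inr_inl_ne_inl G (γ := γ) c₀ d₀)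
          · exact absurd hcd (by simp [uop])
      · exact absurd hab (uop_inl_inr_ne_inl G (γ := γ) a₀ b₀)
    · rcases b with b₀ | b₀
      · exact absurd hab (uop_inr_inl_ne_inl G (γ := γ) a₀ b₀)
      · exact absurd hab (by simp [uop])
  · -- the sum is η s₀
    rcases a with a₀ | a₀
    · rcases b with b₀ | b₀
      · rw [uop_inl_inl G htot] at hab; exact absurd hab (by simp)
      · -- a = a₀, b = η b₀ , with s₀ ⊕ a₀ = b₀
        rw [uop_inl_inr G htot] at hab
        rcases c with c₀ | c₀
        · rcases d with d₀ | d₀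
          · rw [uop_inl_inl G htot] at hcd; exact absurd hcd (by simp)
          · -- case (A,A)
            rw [uop_inl_inr G htot] at hcd
            obtain ⟨p, q, r, hpq, hpr, hcomm⟩ := commL G htot hRDP a₀ c₀
            refine ⟨.inl p, .inl q, .inl r, .inr (fop G htot b₀ r), ?_, ?_, ?_, ?_⟩
            · rw [uop_inl_inl G htot, hpq]
            · rw [uop_inl_inr G htot]
            · rw [uop_inl_inl G htot, hpr]
            · rw [uop_inl_inr G htot]
              rw [← hcd, ← hab, ← hpq, ← hpr,
                fop_assoc G htot s₀, fop_assoc G htot s₀,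
                fop_assoc G htot p, fop_assoc G htot p, hcomm]
        · rcases d with d₀ | d₀
          · -- case (A,B)
            rw [uop_inr_inl G htot] at hcd
            refine ⟨.inl a₀, .inl G.zero, .inr (fop G htot c₀ a₀), .inl d₀,
              ?_, ?_, ?_, ?_⟩
            · rw [uop_inl_inl G htot, fop_zero]
            · rw [uop_inr_inl G htot, ← hab, ← hcd, ← fop_assoc]
            · rw [uop_inl_inr G htot]
            · rw [uop_inl_inl G htot, zero_fop]
          · exact absurd hcd (by simp [uop])
    · rcases b with b₀ | b₀
      · -- a = η a₀, b = b₀, with γ b₀ ⊕ s₀ = a₀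
        rw [uop_inr_inl G htot] at hab
        rcases c with c₀ | c₀
        · rcases d with d₀ | d₀
          · rw [uop_inl_inl G htot] at hcd; exact absurd hcd (by simp)
          · -- case (B,A)
            rw [uop_inl_inr G htot] at hcd
            refine ⟨.inl c₀, .inr (fop G htot a₀ c₀), .inl G.zero, .inl b₀,
              ?_, ?_, ?_, ?_⟩
            · rw [uop_inl_inr G htot]
            · rw [uop_inl_inl G htot, zero_fop]
            · rw [uop_inl_inl G htot, fop_zero]
            · rw [uop_inr_inl G htot, ← hcd, ← hab, ← fop_assoc]
        · rcases d with d₀ | d₀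
          · -- case (B,B)
            rw [uop_inr_inl G htot] at hcd
            obtain ⟨u, q, m, hum, hqm, hcomm⟩ := commR G htot hRDP b₀ d₀
            refine ⟨.inr (fop G htot (γ q) a₀), .inl q, .inl u, .inl m,
              ?_, ?_, ?_, ?_⟩
            · rw [uop_inr_inl G htot]
            · rw [uop_inl_inl G htot, hum]
            · rw [uop_inr_inl G htot, ← hab, ← hcd]
              rw [← fop_assoc, ← fop_assoc, ← gamma_fop G htot hγ,
                ← gamma_fop G htot hγ, ← hum, ← hqm,
                ← fop_assoc, ← fop_assoc, hcomm]
            · rw [uop_inl_inl G htot, hqm]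
          · exact absurd hcd (by simp [uop])
      · exact absurd hab (by simp [uop])
end
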